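/- arXiv:2103.05957 — 5 statements merged into one kernel-verified Lean document; each statement's English description precedes it below -/
import Mathlib

section
/- Let T, γ, η, x₀ > 0 and let ρ, D, E : [0,T) → ℝ be continuous functions with ρ(t) > 0, D(t) > 0 and E(t) ≥ 0 for all t ∈ [0,T). Let X, Y : [0,T) → ℝ be differentiable with X(0) = x₀, Y(0) = 0 and satisfying the ODE system X'(t) = −η^{-1/2}(D(t) X(t) + E(t) Y(t)) and Y'(t) = −γ η^{-1/2}(D(t) X(t) + E(t) Y(t)) − ρ(t) Y(t) on [0,T). Then the function Z := γX − Y is nonincreasing on [0,T), and for every t ∈ (0,T) one has X(t) ∈ (0, x₀), Y(t) ∈ (−γ x₀, 0) and Z(t) ∈ (0, γ x₀). -/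
open Set

/-- If `f` has negative derivative (within `Ico 0 T`) at `s ∈ [0,T)` and `f s = 0`,
then `f < 0` eventually to the right of `s`. -/
lemma aux_right_neg {T : ℝ} {f : ℝ → ℝ} {s d : ℝ} (hs : s ∈ Ico 0 T)
    (hf : HasDerivWithinAt f d (Ico 0 T) s) (hd : d < 0) (hfs : f s = 0) :
    ∀ᶠ t in nhdsWithin s (Ioi s), f t < 0 := by
  have hsub : Ioo s T ⊆ Ico 0 T \ {s} := by
    intro u hu
    exact ⟨⟨le_of_lt (lt_of_le_of_lt hs.1 hu.1), hu.2⟩, (ne_of_gt hu.1)⟩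
  have htend : Filter.Tendsto (slope f s) (nhdsWithin s (Ioo s T)) (nhds d) :=
    (hasDerivWithinAt_iff_tendsto_slope.1 hf).mono_left (nhdsWithin_mono s hsub)
  rw [nhdsWithin_Ioo_eq_nhdsGT hs.2] at htend
  have hev : ∀ᶠ t in nhdsWithin s (Ioi s), slope f s t < 0 :=
    htend.eventually_lt_const hd
  filter_upwards [hev, self_mem_nhdsWithin] with t ht hts
  have hts' : (0:ℝ) < t - s := sub_pos.2 hts
  rw [slope_def_field, hfs, sub_zero] at ht
  rcases (div_neg_iff).1 ht with ⟨h1, h2⟩ | ⟨h1, h2⟩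
  · linarith
  · exact h1

/-- If `f ≤ 0` on `[0,s)`, `f s = 0`, and `f` has derivative `d` within `Ico 0 T` at
`s ∈ (0,T)`, then `d ≥ 0`. -/
lemma aux_left_nonneg {T : ℝ} {f : ℝ → ℝ} {s d : ℝ} (hs0 : 0 < s) (hsT : s < T)
    (hf : HasDerivWithinAt f d (Ico 0 T) s) (hle : ∀ u ∈ Ico (0:ℝ) s, f u ≤ 0)
    (hfs : f s = 0) : 0 ≤ d := by
  have hsub : Ioo (0:ℝ) s ⊆ Ico 0 T \ {s} := by
    intro u hu
    exact ⟨⟨le_of_lt hu.1, lt_trans hu.2 hsT⟩, ne_of_lt hu.2⟩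
  have htend : Filter.Tendsto (slope f s) (nhdsWithin s (Ioo 0 s)) (nhds d) :=
    (hasDerivWithinAt_iff_tendsto_slope.1 hf).mono_left (nhdsWithin_mono s hsub)
  have hne : (nhdsWithin s (Ioo 0 s)).NeBot := by
    refine mem_closure_iff_nhdsWithin_neBot.mp ?_
    rw [closure_Ioo (ne_of_lt hs0)]
    exact ⟨le_of_lt hs0, le_refl s⟩
  refine ge_of_tendsto htend ?_
  filter_upwards [self_mem_nhdsWithin] with u hu
  have h1 : f u ≤ 0 := hle u ⟨le_of_lt hu.1, hu.2⟩
  have h2 : u - s < 0 := sub_neg.2 hu.2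
  rw [slope_def_field, hfs, sub_zero]
  exact div_nonneg_of_nonpos h1 (le_of_lt h2)

/-- Theorem 2.3 (pathwise version): the optimal portfolio process never changes sign,
the impact process stays negative, and the spread process `Z = γX − Y` is nonincreasing. -/
theorem stmt_0 (T γ η x₀ : ℝ) (hT : 0 < T) (hγ : 0 < γ) (hη : 0 < η) (hx₀ : 0 < x₀)
    (ρ D E X Y : ℝ → ℝ)
    (hρc : ContinuousOn ρ (Ico 0 T)) (hDc : ContinuousOn D (Ico 0 T))
    (hEc : ContinuousOn E (Ico 0 T))
    (hρpos : ∀ t ∈ Ico (0:ℝ) T, 0 < ρ t)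
    (hDpos : ∀ t ∈ Ico (0:ℝ) T, 0 < D t)
    (hEnonneg : ∀ t ∈ Ico (0:ℝ) T, 0 ≤ E t)
    (hX0 : X 0 = x₀) (hY0 : Y 0 = 0)
    (hX : ∀ t ∈ Ico (0:ℝ) T,
      HasDerivWithinAt X (-(Real.sqrt η)⁻¹ * (D t * X t + E t * Y t)) (Ico 0 T) t)
    (hY : ∀ t ∈ Ico (0:ℝ) T,
      HasDerivWithinAt Y
        (-γ * (Real.sqrt η)⁻¹ * (D t * X t + E t * Y t) - ρ t * Y t) (Ico 0 T) t) :
    AntitoneOn (fun t => γ * X t - Y t) (Ico 0 T) ∧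
      ∀ t ∈ Ioo (0:ℝ) T,
        X t ∈ Ioo 0 x₀ ∧ Y t ∈ Ioo (-(γ * x₀)) 0 ∧ γ * X t - Y t ∈ Ioo 0 (γ * x₀) := by
  have hsη : 0 < Real.sqrt η := Real.sqrt_pos.2 hη
  have hsηi : 0 < (Real.sqrt η)⁻¹ := inv_pos.2 hsη
  have h0T : (0:ℝ) ∈ Ico (0:ℝ) T := ⟨le_refl 0, hT⟩
  have hXc : ContinuousOn X (Ico 0 T) := fun t ht => (hX t ht).continuousWithinAt
  have hYc : ContinuousOn Y (Ico 0 T) := fun t ht => (hY t ht).continuousWithinAt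
  -- key positivity lemma via an exponential bound
  have keyX : ∀ s ∈ Ico (0:ℝ) T,
      (∀ u ∈ Ico (0:ℝ) s, 0 < X u ∧ Y u ≤ 0) → (0 ≤ X s ∧ Y s ≤ 0) → 0 < X s := by
    intro s hs hP hPs
    rcases eq_or_lt_of_le hs.1 with h0s | h0s
    · rw [← h0s, hX0]; exact hx₀
    -- s > 0
    have hIccsub : Icc (0:ℝ) s ⊆ Ico 0 T := fun u hu => ⟨hu.1, lt_of_le_of_lt hu.2 hs.2⟩
    obtain ⟨u₀, hu₀, hu₀max⟩ :=
      (isCompact_Icc).exists_isMaxOn (nonempty_Icc.2 (le_of_lt h0s)) (hDc.mono hIccsub)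
    set c : ℝ := (Real.sqrt η)⁻¹ * D u₀ with hc
    have hcpos : 0 < c := mul_pos hsηi (hDpos u₀ (hIccsub hu₀))
    have hDle : ∀ u ∈ Icc (0:ℝ) s, (Real.sqrt η)⁻¹ * D u ≤ c :=
      fun u hu => mul_le_mul_of_nonneg_left (hu₀max hu) (le_of_lt hsηi)
    set g : ℝ → ℝ := fun u => X u * Real.exp (c * u) with hg
    have hXnn : ∀ u ∈ Icc (0:ℝ) s, 0 ≤ X u ∧ Y u ≤ 0 := by
      intro u hu
      rcases eq_or_lt_of_le hu.2 with h | h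
      · rw [h]; exact hPs
      · exact ⟨le_of_lt (hP u ⟨hu.1, h⟩).1, (hP u ⟨hu.1, h⟩).2⟩
    have hgmono : MonotoneOn g (Icc 0 s) := by
      have hderiv : ∀ u ∈ Ioo (0:ℝ) s,
          HasDerivAt g ((-(Real.sqrt η)⁻¹ * (D u * X u + E u * Y u)) * Real.exp (c * u)
            + X u * (Real.exp (c * u) * c)) u := by
        intro u hu
        have huT : u ∈ Ico (0:ℝ) T := ⟨le_of_lt hu.1, lt_trans hu.2 hs.2⟩
        have hXd : HasDerivAt X (-(Real.sqrt η)⁻¹ * (D u * X u + E u * Y u)) u :=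
          (hX u huT).hasDerivAt (Ico_mem_nhds hu.1 huT.2)
        have hexp : HasDerivAt (fun u => Real.exp (c * u)) (Real.exp (c * u) * c) u := by
          simpa using (((hasDerivAt_id u).const_mul c).exp)
        exact hXd.mul hexp
      refine monotoneOn_of_deriv_nonneg (convex_Icc 0 s)
        ((hXc.mono hIccsub).mul (Real.continuous_exp.comp (continuous_const.mul continuous_id)).continuousOn)
        ?_ ?_
      · intro u hu
        rw [interior_Icc] at hu
        exact ((hderiv u hu).differentiableAt).differentiableWithinAt
      · intro u hu
        rw [interior_Icc] at hu
        rw [(hderiv u hu).deriv]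
        have huI : u ∈ Icc (0:ℝ) s := ⟨le_of_lt hu.1, le_of_lt hu.2⟩
        have hXu : 0 < X u := (hP u ⟨le_of_lt hu.1, hu.2⟩).1
        have hYu : Y u ≤ 0 := (hP u ⟨le_of_lt hu.1, hu.2⟩).2
        have hexp : 0 < Real.exp (c * u) := Real.exp_pos _
        have hD : (Real.sqrt η)⁻¹ * D u ≤ c := hDle u huI
        have hE : 0 ≤ E u := hEnonneg u (hIccsub huI)
        have h1 : -(Real.sqrt η)⁻¹ * (D u * X u + E u * Y u) + X u * c ≥ 0 := by
          have : (Real.sqrt η)⁻¹ * (E u * Y u) ≤ 0 :=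
            mul_nonpos_of_nonneg_of_nonpos (le_of_lt hsηi) (mul_nonpos_of_nonneg_of_nonpos hE hYu)
          nlinarith [mul_le_mul_of_nonneg_right hD (le_of_lt hXu)]
        nlinarith
    have h01 : g 0 ≤ g s :=
      hgmono ⟨le_refl 0, le_of_lt h0s⟩ ⟨le_of_lt h0s, le_refl s⟩ (le_of_lt h0s)
    have hg0 : g 0 = x₀ := by simp [hg, hX0]
    have hgs : 0 < g s := lt_of_lt_of_le (hg0 ▸ hx₀) h01
    have : 0 < X s * Real.exp (c * s) := hgs
    nlinarith [Real.exp_pos (c * s)]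
  -- main invariant: X stays positive, Y stays nonpositive
  have key : ∀ t ∈ Ico (0:ℝ) T, 0 < X t ∧ Y t ≤ 0 := by
    by_contra hcon
    push_neg at hcon
    obtain ⟨t₀, ht₀, hbad⟩ := hcon
    have hBne : {t | t ∈ Ico (0:ℝ) T ∧ ¬ (0 < X t ∧ Y t ≤ 0)}.Nonempty :=
      ⟨t₀, ht₀, fun h => absurd (hbad h.1) (not_lt.2 h.2)⟩
    set B := {t | t ∈ Ico (0:ℝ) T ∧ ¬ (0 < X t ∧ Y t ≤ 0)} with hB
    have hBbd : BddBelow B := ⟨0, fun t ht => ht.1.1⟩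
    set s := sInf B with hsdef
    have hs0 : 0 ≤ s := le_csInf hBne (fun t ht => ht.1.1)
    obtain ⟨b₀, hb₀⟩ := hBne
    have hsT : s < T := lt_of_le_of_lt (csInf_le hBbd hb₀) hb₀.1.2
    have hsI : s ∈ Ico (0:ℝ) T := ⟨hs0, hsT⟩
    have hP : ∀ u ∈ Ico (0:ℝ) s, 0 < X u ∧ Y u ≤ 0 := by
      intro u hu
      by_contra h
      have : s ≤ u := csInf_le hBbd ⟨⟨hu.1, lt_trans hu.2 hsT⟩, h⟩
      exact absurd hu.2 (not_lt.2 this)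
    have hYs : Y s ≤ 0 := by
      rcases eq_or_lt_of_le hs0 with h | h
      · rw [← h, hY0]
      · have hne : (nhdsWithin s (Ioo 0 s)).NeBot := by
          refine mem_closure_iff_nhdsWithin_neBot.mp ?_
          rw [closure_Ioo (ne_of_lt h)]
          exact ⟨hs0, le_refl s⟩
        have hsub : Ioo (0:ℝ) s ⊆ Ico (0:ℝ) T :=
          fun u hu => ⟨le_of_lt hu.1, lt_trans hu.2 hsT⟩
        have htend : Filter.Tendsto Y (nhdsWithin s (Ioo 0 s)) (nhds (Y s)) :=
          ((hYc s hsI).mono hsub)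
        refine le_of_tendsto htend ?_
        filter_upwards [self_mem_nhdsWithin] with u hu
        exact (hP u ⟨le_of_lt hu.1, hu.2⟩).2
    have hXs0 : 0 ≤ X s := by
      rcases eq_or_lt_of_le hs0 with h | h
      · rw [← h, hX0]; exact le_of_lt hx₀
      · have hne : (nhdsWithin s (Ioo 0 s)).NeBot := by
          refine mem_closure_iff_nhdsWithin_neBot.mp ?_
          rw [closure_Ioo (ne_of_lt h)]
          exact ⟨hs0, le_refl s⟩
        have hsub : Ioo (0:ℝ) s ⊆ Ico (0:ℝ) T :=
          fun u hu => ⟨le_of_lt hu.1, lt_trans hu.2 hsT⟩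
        have htend : Filter.Tendsto X (nhdsWithin s (Ioo 0 s)) (nhds (X s)) :=
          ((hXc s hsI).mono hsub)
        refine ge_of_tendsto htend ?_
        filter_upwards [self_mem_nhdsWithin] with u hu
        exact le_of_lt (hP u ⟨le_of_lt hu.1, hu.2⟩).1
    have hXs : 0 < X s := keyX s hsI hP ⟨hXs0, hYs⟩
    have hsnB : s ∉ B := fun h => h.2 ⟨hXs, hYs⟩
    -- positivity of X on a right neighborhood
    have hXev : {t | 0 < X t} ∈ nhdsWithin s (Ico (0:ℝ) T) :=
      (hXc s hsI).eventually_const_lt hXs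
    obtain ⟨ε₂, hε₂, hball₂⟩ := Metric.mem_nhdsWithin_iff.1 hXev
    rcases lt_or_eq_of_le hYs with hYlt | hYeq
    · -- Y s < 0 : both conditions hold on a right neighborhood
      have hYev : {t | Y t < 0} ∈ nhdsWithin s (Ico (0:ℝ) T) :=
        (hYc s hsI).eventually_lt_const hYlt
      obtain ⟨ε₁, hε₁, hball₁⟩ := Metric.mem_nhdsWithin_iff.1 hYev
      obtain ⟨b, hbB, hbs⟩ := Real.lt_sInf_add_pos ⟨b₀, hb₀⟩ (lt_min hε₁ hε₂)
      have hsb : s ≤ b := csInf_le hBbd hbB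
      have hdist : dist b s < min ε₁ ε₂ := by
        rw [Real.dist_eq, abs_of_nonneg (sub_nonneg.2 hsb)]
        linarith
      have hb1 : Y b < 0 := hball₁ ⟨Metric.mem_ball.2 (lt_of_lt_of_le hdist (min_le_left _ _)), hbB.1⟩
      have hb2 : 0 < X b := hball₂ ⟨Metric.mem_ball.2 (lt_of_lt_of_le hdist (min_le_right _ _)), hbB.1⟩
      exact hbB.2 ⟨hb2, le_of_lt hb1⟩
    · -- Y s = 0 : derivative of Y at s is negative, so Y < 0 just to the right
      have hd : -γ * (Real.sqrt η)⁻¹ * (D s * X s + E s * Y s) - ρ s * Y s < 0 := by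
        rw [hYeq, mul_zero, add_zero, mul_zero, sub_zero]
        have h2 := mul_pos (mul_pos hγ hsηi) (mul_pos (hDpos s hsI) hXs)
        nlinarith [h2]
      have hYev := aux_right_neg hsI (hY s hsI) hd hYeq
      obtain ⟨ε₁, hε₁, hball₁⟩ := Metric.mem_nhdsWithin_iff.1 hYev
      obtain ⟨b, hbB, hbs⟩ := Real.lt_sInf_add_pos ⟨b₀, hb₀⟩ (lt_min hε₁ hε₂)
      have hsb : s ≤ b := csInf_le hBbd hbB
      have hsb' : s < b := lt_of_le_of_ne hsb (fun h => hsnB (h ▸ hbB))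
      have hdist : dist b s < min ε₁ ε₂ := by
        rw [Real.dist_eq, abs_of_nonneg (sub_nonneg.2 hsb)]
        linarith
      have hb1 : Y b < 0 := hball₁ ⟨Metric.mem_ball.2 (lt_of_lt_of_le hdist (min_le_left _ _)), hsb'⟩
      have hb2 : 0 < X b := hball₂ ⟨Metric.mem_ball.2 (lt_of_lt_of_le hdist (min_le_right _ _)), hbB.1⟩
      exact hbB.2 ⟨hb2, le_of_lt hb1⟩
  -- Y is strictly negative on (0,T)
  have hYneg : ∀ t ∈ Ioo (0:ℝ) T, Y t < 0 := by
    intro t ht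
    have htI : t ∈ Ico (0:ℝ) T := ⟨le_of_lt ht.1, ht.2⟩
    rcases lt_or_eq_of_le (key t htI).2 with h | h
    · exact h
    · exfalso
      have hd : -γ * (Real.sqrt η)⁻¹ * (D t * X t + E t * Y t) - ρ t * Y t < 0 := by
        rw [h, mul_zero, add_zero, mul_zero, sub_zero]
        have h2 := mul_pos (mul_pos hγ hsηi) (mul_pos (hDpos t htI) (key t htI).1)
        nlinarith [h2]
      have := aux_left_nonneg ht.1 ht.2 (hY t htI)
        (fun u hu => (key u ⟨hu.1, lt_trans hu.2 ht.2⟩).2) h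
      linarith
  -- the spread process Z
  have hZd : ∀ t ∈ Ico (0:ℝ) T,
      HasDerivWithinAt (fun t => γ * X t - Y t) (ρ t * Y t) (Ico 0 T) t := by
    intro t ht
    have h := ((hX t ht).const_mul γ).sub (hY t ht)
    exact h.congr_deriv (by ring)
  have hZc : ContinuousOn (fun t => γ * X t - Y t) (Ico 0 T) :=
    fun t ht => (hZd t ht).continuousWithinAt
  have hZanti : StrictAntiOn (fun t => γ * X t - Y t) (Ico 0 T) := by
    refine strictAntiOn_of_deriv_neg (convex_Ico 0 T) hZc ?_
    intro t ht
    rw [interior_Ico] at ht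
    have htI : t ∈ Ico (0:ℝ) T := ⟨le_of_lt ht.1, ht.2⟩
    have hdd : HasDerivAt (fun t => γ * X t - Y t) (ρ t * Y t) t :=
      (hZd t htI).hasDerivAt (Ico_mem_nhds ht.1 ht.2)
    rw [hdd.deriv]
    exact mul_neg_of_pos_of_neg (hρpos t htI) (hYneg t ht)
  constructor
  · intro a ha b hb hab
    rcases eq_or_lt_of_le hab with h | h
    · rw [h]
    · exact le_of_lt (hZanti ha hb h)
  · intro t ht
    have htI : t ∈ Ico (0:ℝ) T := ⟨le_of_lt ht.1, ht.2⟩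
    have hXt := (key t htI).1
    have hYt := hYneg t ht
    have hZlt : γ * X t - Y t < γ * X 0 - Y 0 := hZanti h0T htI ht.1
    rw [hX0, hY0, sub_zero] at hZlt
    refine ⟨⟨hXt, ?_⟩, ⟨?_, hYt⟩, ⟨?_, hZlt⟩⟩
    · nlinarith
    · nlinarith
    · nlinarith
end

section
/- Let T > 0, γ > 0, C > 0 and let ρ : [0,T] → (0,∞) be continuous. Set λ(t) := C ρ(t) and φ(t) := √(λ(t) + 2γρ(t)). Define B(t) := −C/γ + (1/γ)·√(C(C+2γ))·coth( arcoth((C+γ)/√(C(C+2γ))) + √(C/(C+2γ)) ∫_t^T ρ(s) ds ). Then B is differentiable on [0,T], B(T) = 1, and B satisfies the Riccati ODE −B'(t) = −(1/φ(t)²)·( γ (ρ(t) B(t))² − 2 λ(t) ρ(t) (1 − B(t)) ) for all t ∈ [0,T]. -/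
open Set

/-- Hyperbolic cotangent. -/
noncomputable def coth (x : ℝ) : ℝ := Real.cosh x / Real.sinh x

/-- Inverse hyperbolic cotangent. -/
noncomputable def arcoth (x : ℝ) : ℝ := (1 / 2) * Real.log ((x + 1) / (x - 1))

lemma coth_arcoth {x : ℝ} (hx : 1 < x) : coth (arcoth x) = x := by
  have h1 : (0:ℝ) < x - 1 := by linarith
  have h2 : (0:ℝ) < x + 1 := by linarith
  have hr : (0:ℝ) < (x + 1) / (x - 1) := div_pos h2 h1
  set y := arcoth x with hy
  have key : Real.exp y * Real.exp y = (x + 1) / (x - 1) := by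
    rw [← Real.exp_add, hy, arcoth]
    rw [show (1:ℝ)/2 * Real.log ((x + 1) / (x - 1)) + 1/2 * Real.log ((x + 1) / (x - 1))
        = Real.log ((x+1)/(x-1)) by ring]
    exact Real.exp_log hr
  have key' : Real.exp y * Real.exp y * (x - 1) = x + 1 := by
    rw [key]; field_simp
  have hne : Real.exp y - (Real.exp y)⁻¹ ≠ 0 := by
    intro h0
    rw [sub_eq_zero] at h0
    have he1 : Real.exp y * Real.exp y = 1 := by
      nth_rewrite 2 [h0]
      exact mul_inv_cancel₀ (Real.exp_ne_zero y)
    rw [he1, one_mul] at key'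
    linarith
  rw [coth, Real.cosh_eq, Real.sinh_eq, Real.exp_neg]
  rw [div_eq_iff (div_ne_zero hne two_ne_zero)]
  field_simp
  linear_combination -key'

lemma arcoth_pos {x : ℝ} (hx : 1 < x) : 0 < arcoth x := by
  rw [arcoth]
  have h1 : (0:ℝ) < x - 1 := by linarith
  have : (1:ℝ) < (x + 1) / (x - 1) := by rw [lt_div_iff₀ h1]; linarith
  have := Real.log_pos this
  linarith

lemma hasDerivAt_coth {u : ℝ} (hu : Real.sinh u ≠ 0) :
    HasDerivAt coth (1 - coth u ^ 2) u := by
  have h := ((Real.hasDerivAt_cosh u).div (Real.hasDerivAt_sinh u) hu)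
  convert h using 1
  · rfl
  · rfl
  · rfl
  rw [coth]
  have hc := Real.cosh_sq_sub_sinh_sq u
  field_simp

/-- The Example in Section 2.1 (case `C > 0`): when `λ = Cρ`, the terminal value problem
`−Ḃ = −(1/φ²)(γ(ρB)² − 2λρ(1−B))`, `B(T) = 1` has the stated closed-form solution. -/
theorem stmt_2 (T γ C : ℝ) (hT : 0 < T) (hγ : 0 < γ) (hC : 0 < C)
    (ρ : ℝ → ℝ) (hρc : ContinuousOn ρ (Icc 0 T)) (hρpos : ∀ t ∈ Icc (0:ℝ) T, 0 < ρ t)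
    (lam φ B : ℝ → ℝ)
    (hlam : ∀ t, lam t = C * ρ t)
    (hφ : ∀ t, φ t = Real.sqrt (lam t + 2 * γ * ρ t))
    (hB : ∀ t, B t = -C / γ + (1 / γ) * Real.sqrt (C * (C + 2 * γ)) *
        coth (arcoth ((C + γ) / Real.sqrt (C * (C + 2 * γ))) +
          Real.sqrt (C / (C + 2 * γ)) * ∫ s in t..T, ρ s)) :
    B T = 1 ∧
      ∀ t ∈ Icc (0:ℝ) T,
        HasDerivWithinAt B
          ((1 / (φ t) ^ 2) * (γ * (ρ t * B t) ^ 2 - 2 * lam t * ρ t * (1 - B t)))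
          (Icc 0 T) t := by
  set K := Real.sqrt (C * (C + 2 * γ)) with hKdef
  set m := Real.sqrt (C / (C + 2 * γ)) with hmdef
  set a := arcoth ((C + γ) / K) with hadef
  have hCK : 0 < C * (C + 2 * γ) := by positivity
  have hKpos : 0 < K := Real.sqrt_pos.2 hCK
  have hK2 : K ^ 2 = C * (C + 2 * γ) := Real.sq_sqrt hCK.le
  have hmpos : 0 < m := Real.sqrt_pos.2 (by positivity)
  have hKm : K * m = C := by
    rw [hKdef, hmdef, ← Real.sqrt_mul hCK.le]
    rw [show C * (C + 2 * γ) * (C / (C + 2 * γ)) = C ^ 2 by field_simp]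
    exact Real.sqrt_sq hC.le
  have hKlt : K < C + γ := by nlinarith [hK2, sq_nonneg γ]
  have hx1 : 1 < (C + γ) / K := (one_lt_div hKpos).2 hKlt
  have hBT : B T = 1 := by
    rw [hB T, intervalIntegral.integral_same, mul_zero, add_zero, hadef, coth_arcoth hx1]
    field_simp
    ring
  refine ⟨hBT, fun t ht => ?_⟩
  obtain ⟨ht0, htT⟩ := ht
  have hint : IntervalIntegrable ρ MeasureTheory.volume t T :=
    (hρc.mono (by
      intro x hx
      rw [uIcc_of_le htT] at hx
      exact ⟨le_trans ht0 hx.1, hx.2⟩)).intervalIntegrable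
  have hInonneg : 0 ≤ ∫ s in t..T, ρ s := by
    apply intervalIntegral.integral_nonneg htT
    intro u hu
    exact (hρpos u ⟨le_trans ht0 hu.1, hu.2⟩).le
  set u := a + m * ∫ s in t..T, ρ s with hudef
  have hupos : 0 < u := by
    have := arcoth_pos hx1
    rw [hudef, ← hadef] at *
    nlinarith
  have hsinh : Real.sinh u ≠ 0 := by
    have : 0 < Real.sinh u := by rwa [Real.sinh_pos_iff]
    exact this.ne'
  haveI : Fact (t ∈ Icc (0:ℝ) T) := ⟨⟨ht0, htT⟩⟩
  have hIderiv : HasDerivWithinAt (fun x => ∫ s in x..T, ρ s) (-ρ t) (Icc 0 T) t :=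
    intervalIntegral.integral_hasDerivWithinAt_left hint
      (hρc.stronglyMeasurableAtFilter_nhdsWithin measurableSet_Icc t)
      (hρc.continuousWithinAt ⟨ht0, htT⟩)
  have huderiv : HasDerivWithinAt (fun x => a + m * ∫ s in x..T, ρ s) (m * (-ρ t)) (Icc 0 T) t :=
    (hIderiv.const_mul m).const_add a
  have hcoth : HasDerivWithinAt (fun x => coth (a + m * ∫ s in x..T, ρ s))
      ((1 - coth u ^ 2) * (m * (-ρ t))) (Icc 0 T) t :=
    (hasDerivAt_coth hsinh).comp_hasDerivWithinAt (h₂ := coth) t huderiv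
  have hBfun : B = fun x => -C / γ + (1 / γ) * K * coth (a + m * ∫ s in x..T, ρ s) :=
    funext fun x => hB x
  have hBderiv : HasDerivWithinAt B
      (1 / γ * K * ((1 - coth u ^ 2) * (m * (-ρ t)))) (Icc 0 T) t := by
    rw [hBfun]
    exact (hcoth.const_mul (1 / γ * K)).const_add (-C / γ)
  convert hBderiv using 1
  have hρt : 0 < ρ t := hρpos t ⟨ht0, htT⟩
  have hφ2 : (φ t) ^ 2 = (C + 2 * γ) * ρ t := by
    rw [hφ t, hlam t, Real.sq_sqrt (by nlinarith)]
    ring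
  rw [hφ2, hB t, hlam t, ← hudef]
  set c := coth u with hcdef
  have hRHS : 1 / γ * K * ((1 - c ^ 2) * (m * -ρ t)) = C * ρ t * (c ^ 2 - 1) / γ := by
    rw [show 1 / γ * K * ((1 - c ^ 2) * (m * -ρ t)) = K * m * (ρ t * (c ^ 2 - 1)) / γ from by
      ring, hKm]
    ring
  rw [hRHS]
  have h1 : (C + 2 * γ) ≠ 0 := by positivity
  field_simp
  linear_combination c ^ 2 * hK2
end

section
/- Let T > 0 and let j : [0,T] → [0,∞) be non-decreasing; extend j by j(t) := 0 for t < 0. Then for every ε ∈ (0,T) and every natural number k, ∫₀^T (j(t) − j(t−ε))² dt ≤ (T/2^k + ε) · j(T)². -/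
open Set

/-- The key deterministic inequality in the proof of Lemma 4.6: for a non-decreasing
nonnegative `j` on `[0,T]` extended by `0` for negative times,
`∫₀ᵀ (j(t) − j(t−ε))² dt ≤ (T/2^k + ε)·j(T)²`. -/
theorem stmt_8 (T : ℝ) (hT : 0 < T) (j : ℝ → ℝ)
    (hnonneg : ∀ t, 0 ≤ j t)
    (hmono : MonotoneOn j (Icc 0 T))
    (hneg : ∀ t < (0:ℝ), j t = 0) :
    ∀ ε ∈ Ioo (0:ℝ) T, ∀ k : ℕ,
      ∫ t in (0:ℝ)..T, (j t - j (t - ε)) ^ 2 ≤ (T / 2 ^ k + ε) * (j T) ^ 2 := by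
  rintro ε ⟨hε0, hεT⟩ k
  set J : ℝ → ℝ := fun t => if t < 0 then 0 else if t ≤ T then j t else j T with hJdef
  have hJval : ∀ t, 0 ≤ t → t ≤ T → J t = j t := by
    intro t h0 h1
    simp [hJdef, not_lt.2 h0, h1]
  have hJ0 : ∀ t, 0 ≤ J t := by
    intro t
    by_cases h : t < 0
    · simp [hJdef, h]
    · by_cases h' : t ≤ T <;> simp [hJdef, h, h', hnonneg]
  have hJT : J T = j T := hJval T hT.le le_rfl
  have hJleT : ∀ t, J t ≤ j T := by
    intro t
    by_cases h : t < 0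
    · simp [hJdef, h, hnonneg]
    · by_cases h' : t ≤ T
      · simp only [hJdef, if_neg h, if_pos h']
        exact hmono ⟨not_lt.1 h, h'⟩ ⟨hT.le, le_rfl⟩ h'
      · simp [hJdef, h, h']
  have hJmono : Monotone J := by
    intro a b hab
    by_cases ha : a < 0
    · simp only [hJdef, if_pos ha]; exact hJ0 b
    · have hb : ¬ b < 0 := fun h => ha (lt_of_le_of_lt hab h)
      by_cases hb' : b ≤ T
      · have ha' : a ≤ T := hab.trans hb'
        simp only [hJdef, if_neg ha, if_neg hb, if_pos ha', if_pos hb']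
        exact hmono ⟨not_lt.1 ha, ha'⟩ ⟨not_lt.1 hb, hb'⟩ hab
      · simp only [hJdef, if_neg ha, if_neg hb, if_neg hb']
        by_cases ha' : a ≤ T
        · simp only [if_pos ha']
          exact hmono ⟨not_lt.1 ha, ha'⟩ ⟨hT.le, le_rfl⟩ ha'
        · simp [ha']
  -- the shifted function
  have hJsmono : Monotone (fun t => J (t - ε)) :=
    hJmono.comp (fun a b h => sub_le_sub_right h ε)
  set f : ℝ → ℝ := fun t => J t - J (t - ε) with hfdef
  have hfint : IntervalIntegrable f MeasureTheory.volume 0 T :=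
    (hJmono.intervalIntegrable).sub (hJsmono.intervalIntegrable)
  have hfmeas : MeasureTheory.AEStronglyMeasurable f MeasureTheory.volume :=
    ((hJmono.measurable.sub (hJmono.measurable.comp (measurable_id.sub_const ε)))).aestronglyMeasurable
  have hfbdd : ∀ x, ‖f x‖ ≤ j T := by
    intro x
    rw [Real.norm_eq_abs, abs_le]
    constructor
    · have := hJleT (x - ε); have := hJ0 x; simp only [hfdef]; linarith
    · have := hJleT x; have := hJ0 (x - ε); simp only [hfdef]; linarith
  have hf2int : IntervalIntegrable (fun t => f t ^ 2) MeasureTheory.volume 0 T := by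
    have : (fun t => f t ^ 2) = fun t => f t * f t := by funext t; ring
    rw [this, intervalIntegrable_iff] at *
    exact (hfint.bdd_mul hfmeas.restrict (MeasureTheory.ae_of_all _ hfbdd))
  -- reduce j-integral to J-integral
  have hcongr : (∫ t in (0:ℝ)..T, (j t - j (t - ε)) ^ 2) = ∫ t in (0:ℝ)..T, f t ^ 2 := by
    apply intervalIntegral.integral_congr
    intro t ht
    rw [uIcc_of_le hT.le] at ht
    have h1 : J t = j t := hJval t ht.1 ht.2
    have h2 : J (t - ε) = j (t - ε) := by
      by_cases h : t - ε < 0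
      · simp [hJdef, h, hneg _ h]
      · exact hJval _ (not_lt.1 h) (by linarith [ht.2])
    simp [hfdef, h1, h2]
  rw [hcongr]
  -- pointwise bound f² ≤ jT * f on [0,T]
  have hstep1 : (∫ t in (0:ℝ)..T, f t ^ 2) ≤ ∫ t in (0:ℝ)..T, j T * f t := by
    apply intervalIntegral.integral_mono_on hT.le hf2int (hfint.const_mul _)
    intro t ht
    have hf0 : 0 ≤ f t := by
      have : J (t - ε) ≤ J t := hJmono (by linarith)
      simp only [hfdef]; linarith
    have hfle : f t ≤ j T := by
      have := hJleT t; have := hJ0 (t - ε); simp only [hfdef]; linarith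
    calc f t ^ 2 = f t * f t := by ring
      _ ≤ j T * f t := mul_le_mul_of_nonneg_right hfle hf0
  rw [intervalIntegral.integral_const_mul] at hstep1
  -- compute ∫ f
  have hshift : (∫ t in (0:ℝ)..T, J (t - ε)) = ∫ t in (0:ℝ) - ε..T - ε, J t :=
    intervalIntegral.integral_comp_sub_right J ε
  have hsplit : (∫ t in (0:ℝ)..T, f t) = (∫ t in (0:ℝ)..T, J t) - ∫ t in (0:ℝ) - ε..T - ε, J t := by
    rw [← hshift, hfdef]
    exact intervalIntegral.integral_sub (hJmono.intervalIntegrable) (hJsmono.intervalIntegrable)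
  have hadd1 : (∫ t in (-ε:ℝ)..(T - ε), J t) + ∫ t in (T - ε)..T, J t = ∫ t in (-ε:ℝ)..T, J t :=
    intervalIntegral.integral_add_adjacent_intervals
      (hJmono.intervalIntegrable) (hJmono.intervalIntegrable)
  have hadd2 : (∫ t in (-ε:ℝ)..(0:ℝ), J t) + ∫ t in (0:ℝ)..T, J t = ∫ t in (-ε:ℝ)..T, J t :=
    intervalIntegral.integral_add_adjacent_intervals
      (hJmono.intervalIntegrable) (hJmono.intervalIntegrable)
  have hneg0 : 0 ≤ ∫ t in (-ε:ℝ)..(0:ℝ), J t :=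
    intervalIntegral.integral_nonneg (by linarith) (fun t _ => hJ0 t)
  have htail : (∫ t in (T - ε)..T, J t) ≤ ε * j T := by
    have : (∫ t in (T - ε)..T, J t) ≤ ∫ t in (T - ε)..T, j T := by
      apply intervalIntegral.integral_mono_on (by linarith) (hJmono.intervalIntegrable)
        intervalIntegrable_const
      intro t _
      exact hJleT t
    simpa [mul_comm] using this
  have hintf : (∫ t in (0:ℝ)..T, f t) ≤ ε * j T := by
    rw [hsplit]
    have : (0:ℝ) - ε = -ε := by ring
    rw [this]
    have key : (∫ t in (0:ℝ)..T, J t) - (∫ t in (-ε:ℝ)..(T - ε), J t)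
        = (∫ t in (T - ε)..T, J t) - ∫ t in (-ε:ℝ)..(0:ℝ), J t := by
      linarith [hadd1, hadd2]
    rw [key]
    linarith
  have hfinal : (∫ t in (0:ℝ)..T, f t ^ 2) ≤ ε * j T ^ 2 := by
    calc (∫ t in (0:ℝ)..T, f t ^ 2) ≤ j T * ∫ t in (0:ℝ)..T, f t := hstep1
      _ ≤ j T * (ε * j T) := mul_le_mul_of_nonneg_left hintf (hnonneg T)
      _ = ε * j T ^ 2 := by ring
  have hk : 0 ≤ T / 2 ^ k := by positivity
  nlinarith [sq_nonneg (j T), hk]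
end

section
/- Let (Ω, F, ℙ) be a probability space, T > 0, γ > 0, ρ̄ > 0, and let ρ : Ω × [0,T] → [0, ρ̄] be jointly measurable. Let X₀ ≥ 0 be a constant and let X : Ω × [0,T] → ℝ be jointly measurable with X(·,0) = X₀, E(∫₀^T X_s² ds) < ∞ and E(X_T²) < ∞. Define Y_t := γ X_t − γ exp(−∫₀^t ρ_u du) ( X₀ + ∫₀^t ρ_s X_s exp(∫₀^s ρ_u du) ds ). Then √(E(Y_T²)) ≤ γ ( X₀ + √(E(X_T²)) + ρ̄ e^{Tρ̄} √( T · E(∫₀^T X_s² ds) ) ), and √( E(∫₀^T Y_t² dt) ) ≤ γ X₀ √T + γ (1 + T ρ̄ e^{Tρ̄}) √( E(∫₀^T X_t² dt) ). -/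
open Set MeasureTheory

set_option maxHeartbeats 1600000

section Helpers
variable {α : Type*} [MeasurableSpace α] {μ : Measure α}


lemma cs_integral {f g : α → ℝ} (hfm : AEStronglyMeasurable f μ)
    (hgm : AEStronglyMeasurable g μ)
    (hf : Integrable (fun x => f x ^ 2) μ) (hg : Integrable (fun x => g x ^ 2) μ)
    (hfnn : ∀ x, 0 ≤ f x) (hgnn : ∀ x, 0 ≤ g x) :
    ∫ x, f x * g x ∂μ ≤ Real.sqrt (∫ x, f x ^ 2 ∂μ) * Real.sqrt (∫ x, g x ^ 2 ∂μ) := by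
  have hpq : Real.HolderConjugate 2 2 := Real.HolderConjugate.two_two
  have h2 : ENNReal.ofReal (2:ℝ) = 2 := by
    simp [ENNReal.ofReal_ofNat]
  have hfL : MemLp f (ENNReal.ofReal (2:ℝ)) μ := by
    rw [h2]; exact (memLp_two_iff_integrable_sq hfm).2 hf
  have hgL : MemLp g (ENNReal.ofReal (2:ℝ)) μ := by
    rw [h2]; exact (memLp_two_iff_integrable_sq hgm).2 hg
  have h := MeasureTheory.integral_mul_le_Lp_mul_Lq_of_nonneg hpq
    (Filter.Eventually.of_forall hfnn) (Filter.Eventually.of_forall hgnn) hfL hgL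
  have e1 : ∀ x : ℝ, x ^ (2:ℝ) = x ^ 2 := fun x => by
    rw [show (2:ℝ) = ((2:ℕ):ℝ) by norm_num, Real.rpow_natCast]
  simp only [e1] at h
  calc ∫ x, f x * g x ∂μ ≤ (∫ x, f x ^ 2 ∂μ) ^ (1/(2:ℝ)) * (∫ x, g x ^ 2 ∂μ) ^ (1/(2:ℝ)) := h
    _ = Real.sqrt (∫ x, f x ^ 2 ∂μ) * Real.sqrt (∫ x, g x ^ 2 ∂μ) := by
        rw [← Real.sqrt_eq_rpow, ← Real.sqrt_eq_rpow]

lemma l2tri {f g : α → ℝ} (hfm : AEStronglyMeasurable f μ)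
    (hgm : AEStronglyMeasurable g μ)
    (hf : Integrable (fun x => f x ^ 2) μ) (hg : Integrable (fun x => g x ^ 2) μ)
    (hfnn : ∀ x, 0 ≤ f x) (hgnn : ∀ x, 0 ≤ g x) :
    Real.sqrt (∫ x, (f x + g x) ^ 2 ∂μ) ≤
      Real.sqrt (∫ x, f x ^ 2 ∂μ) + Real.sqrt (∫ x, g x ^ 2 ∂μ) := by
  set F := Real.sqrt (∫ x, f x ^ 2 ∂μ) with hF
  set G := Real.sqrt (∫ x, g x ^ 2 ∂μ) with hG
  have hFnn : 0 ≤ F := Real.sqrt_nonneg _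
  have hGnn : 0 ≤ G := Real.sqrt_nonneg _
  have hf2 : (0:ℝ) ≤ ∫ x, f x ^ 2 ∂μ := integral_nonneg fun x => sq_nonneg _
  have hg2 : (0:ℝ) ≤ ∫ x, g x ^ 2 ∂μ := integral_nonneg fun x => sq_nonneg _
  have hFsq : F ^ 2 = ∫ x, f x ^ 2 ∂μ := Real.sq_sqrt hf2
  have hGsq : G ^ 2 = ∫ x, g x ^ 2 ∂μ := Real.sq_sqrt hg2
  have hfg : Integrable (fun x => f x * g x) μ := by
    refine (hf.add hg).mono' (hfm.mul hgm) (Filter.Eventually.of_forall fun x => ?_)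
    simp only [Pi.add_apply]
    rw [Real.norm_eq_abs, abs_mul, abs_of_nonneg (hfnn x), abs_of_nonneg (hgnn x)]
    nlinarith [sq_nonneg (f x - g x)]
  have hcs : ∫ x, f x * g x ∂μ ≤ F * G := cs_integral hfm hgm hf hg hfnn hgnn
  have hexp : ∫ x, (f x + g x) ^ 2 ∂μ
      = (∫ x, f x ^ 2 ∂μ) + ((2:ℝ) * ∫ x, f x * g x ∂μ + ∫ x, g x ^ 2 ∂μ) := by
    calc ∫ x, (f x + g x) ^ 2 ∂μ
        = ∫ x, (f x ^ 2 + (2 * (f x * g x) + g x ^ 2)) ∂μ := by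
          congr 1; ext x; ring
      _ = (∫ x, f x ^ 2 ∂μ) + ∫ x, (2 * (f x * g x) + g x ^ 2) ∂μ :=
          integral_add hf ((hfg.const_mul 2).add hg)
      _ = (∫ x, f x ^ 2 ∂μ) + ((2:ℝ) * ∫ x, f x * g x ∂μ + ∫ x, g x ^ 2 ∂μ) := by
          rw [integral_add (hfg.const_mul 2) hg, integral_const_mul]
  have hle : ∫ x, (f x + g x) ^ 2 ∂μ ≤ (F + G) ^ 2 := by
    rw [hexp]; nlinarith
  calc Real.sqrt (∫ x, (f x + g x) ^ 2 ∂μ) ≤ Real.sqrt ((F + G) ^ 2) :=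
        Real.sqrt_le_sqrt hle
    _ = F + G := Real.sqrt_sq (by linarith)

end Helpers

/-- Lemma 4.9, estimates (4.9) and (4.10): bounds on the transient price impact process
`Y_t = γX_t − γe^{−∫₀ᵗρ}(X₀ + ∫₀ᵗ ρ_s X_s e^{∫₀ˢρ} ds)`. -/
theorem stmt_10 {Ω : Type*} [MeasurableSpace Ω] (ℙ : Measure Ω) [IsProbabilityMeasure ℙ]
    (T γ ρhi X₀ : ℝ) (hT : 0 < T) (hγ : 0 < γ) (hρhi : 0 < ρhi) (hX₀ : 0 ≤ X₀)
    (ρ : Ω → ℝ → ℝ) (hρmeas : Measurable (Function.uncurry ρ))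
    (hρb : ∀ ω, ∀ t ∈ Icc (0:ℝ) T, ρ ω t ∈ Icc 0 ρhi)
    (X : Ω → ℝ → ℝ) (hXmeas : Measurable (Function.uncurry X))
    (hX0 : ∀ ω, X ω 0 = X₀)
    (hXii : ∀ ω, IntervalIntegrable (fun t => (X ω t) ^ 2) MeasureTheory.volume 0 T)
    (hXint : Integrable (fun ω => ∫ t in (0:ℝ)..T, (X ω t) ^ 2) ℙ)
    (hXT : Integrable (fun ω => (X ω T) ^ 2) ℙ)
    (Y : Ω → ℝ → ℝ)
    (hY : ∀ ω t, Y ω t = γ * X ω t -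
      γ * Real.exp (-(∫ u in (0:ℝ)..t, ρ ω u)) *
        (X₀ + ∫ s in (0:ℝ)..t, ρ ω s * X ω s * Real.exp (∫ u in (0:ℝ)..s, ρ ω u))) :
    Real.sqrt (∫ ω, (Y ω T) ^ 2 ∂ℙ) ≤
        γ * (X₀ + Real.sqrt (∫ ω, (X ω T) ^ 2 ∂ℙ) +
          ρhi * Real.exp (T * ρhi) *
            Real.sqrt (T * ∫ ω, (∫ t in (0:ℝ)..T, (X ω t) ^ 2) ∂ℙ)) ∧
      Real.sqrt (∫ ω, (∫ t in (0:ℝ)..T, (Y ω t) ^ 2) ∂ℙ) ≤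
        γ * X₀ * Real.sqrt T +
          γ * (1 + T * ρhi * Real.exp (T * ρhi)) *
            Real.sqrt (∫ ω, (∫ t in (0:ℝ)..T, (X ω t) ^ 2) ∂ℙ) := by
  have hXm : ∀ ω, Measurable (X ω) := fun ω => hXmeas.comp measurable_prodMk_left
  have hρm : ∀ ω, Measurable (ρ ω) := fun ω => hρmeas.comp measurable_prodMk_left
  have hXTm : Measurable (fun ω => X ω T) := hXmeas.comp measurable_prodMk_right
  set A : Ω → ℝ := fun ω => ∫ s in Ioc (0:ℝ) T, |X ω s| with hA_def
  set Q : Ω → ℝ := fun ω => ∫ s in Ioc (0:ℝ) T, (X ω s) ^ 2 with hQ_def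
  have hQeq : ∀ ω, (∫ t in (0:ℝ)..T, (X ω t) ^ 2) = Q ω := fun ω =>
    intervalIntegral.integral_of_le hT.le
  have hAsm : StronglyMeasurable A :=
    StronglyMeasurable.integral_prod_right'
      (ν := volume.restrict (Ioc (0:ℝ) T)) (hXmeas.abs.stronglyMeasurable)
  have hAm : Measurable A := hAsm.measurable
  have hQIoc : ∀ ω, IntegrableOn (fun s => (X ω s) ^ 2) (Ioc 0 T) volume := fun ω =>
    (intervalIntegrable_iff_integrableOn_Ioc_of_le hT.le).1 (hXii ω)
  have hAIoc : ∀ ω, IntegrableOn (fun s => |X ω s|) (Ioc 0 T) volume := by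
    intro ω
    refine ((integrableOn_const (C := (1:ℝ)) measure_Ioc_lt_top.ne).add (hQIoc ω)).mono'
      ((hXm ω).abs.aestronglyMeasurable) (Filter.Eventually.of_forall fun s => ?_)
    simp only [Pi.add_apply]
    rw [Real.norm_eq_abs, abs_abs]
    nlinarith [sq_nonneg (|X ω s| - 1), sq_abs (X ω s)]
  have hAnn : ∀ ω, 0 ≤ A ω := fun ω => integral_nonneg fun s => abs_nonneg _
  have hQnn : ∀ ω, 0 ≤ Q ω := fun ω => integral_nonneg fun s => sq_nonneg _
  -- time-wise Cauchy–Schwarz : A ω ^ 2 ≤ T * Q ω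
  have hAQ : ∀ ω, A ω ≤ Real.sqrt (Q ω) * Real.sqrt T := by
    intro ω
    have h1 : IntegrableOn (fun _ : ℝ => (1:ℝ)) (Ioc 0 T) volume :=
      integrableOn_const measure_Ioc_lt_top.ne
    have hsq : Integrable (fun s => |X ω s| ^ 2) (volume.restrict (Ioc (0:ℝ) T)) := by
      have : (fun s => |X ω s| ^ 2) = fun s => (X ω s) ^ 2 := funext fun s => sq_abs _
      rw [this]; exact hQIoc ω
    have h := cs_integral (μ := volume.restrict (Ioc (0:ℝ) T))
      (f := fun s => |X ω s|) (g := fun _ => (1:ℝ))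
      ((hXm ω).abs.aestronglyMeasurable) aestronglyMeasurable_const
      hsq (by simpa using h1) (fun s => abs_nonneg _) (fun _ => zero_le_one)
    simp only [mul_one, one_pow] at h
    have hone : ∫ _ in Ioc (0:ℝ) T, (1:ℝ) = T := by
      simp [Real.volume_Ioc, ENNReal.toReal_ofReal hT.le, hT.le]
    have hsq' : (∫ s in Ioc (0:ℝ) T, |X ω s| ^ 2) = Q ω := by
      rw [hQ_def]; congr 1; ext s; exact sq_abs _
    rw [hone, hsq'] at h
    exact h
  have hA2 : ∀ ω, (A ω) ^ 2 ≤ T * Q ω := by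
    intro ω
    have h := pow_le_pow_left₀ (hAnn ω) (hAQ ω) 2
    calc (A ω) ^ 2 ≤ (Real.sqrt (Q ω) * Real.sqrt T) ^ 2 := h
      _ = T * Q ω := by
          rw [mul_pow, Real.sq_sqrt (hQnn ω), Real.sq_sqrt hT.le]; ring
  -- pointwise key bound
  have hkey : ∀ ω, ∀ t ∈ Icc (0:ℝ) T,
      |Y ω t| ≤ γ * |X ω t| + (γ * X₀ + γ * ρhi * A ω) := by
    intro ω t ht
    obtain ⟨ht0, htT⟩ := ht
    have hRIoc : IntegrableOn (ρ ω) (Ioc 0 T) volume := by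
      refine Measure.integrableOn_of_bounded (M := ρhi) ?_ (hρm ω).aestronglyMeasurable ?_
      · simp [Real.volume_Ioc]
      · refine (ae_restrict_iff' measurableSet_Ioc).2 (Filter.Eventually.of_forall fun s hs => ?_)
        have hb := hρb ω s ⟨hs.1.le, hs.2⟩
        rw [Real.norm_eq_abs, abs_of_nonneg hb.1]; exact hb.2
    have hRii : ∀ a b : ℝ, 0 ≤ a → a ≤ b → b ≤ T → IntervalIntegrable (ρ ω) volume a b :=
      fun a b ha hab hbT => (intervalIntegrable_iff_integrableOn_Ioc_of_le hab).2
        (hRIoc.mono_set (Ioc_subset_Ioc ha hbT))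
    set I : ℝ → ℝ := fun u => ∫ v in (0:ℝ)..u, ρ ω v with hI_def
    have hItnn : 0 ≤ I t :=
      intervalIntegral.integral_nonneg ht0 (fun x hx => (hρb ω x ⟨hx.1, hx.2.trans htT⟩).1)
    have hImono : ∀ s, 0 ≤ s → s ≤ t → I s ≤ I t := by
      intro s hs hst
      have hadd := intervalIntegral.integral_add_adjacent_intervals
        (hRii 0 s le_rfl hs (hst.trans htT)) (hRii s t hs hst htT)
      have hpos : 0 ≤ ∫ v in s..t, ρ ω v := intervalIntegral.integral_nonneg hst
        (fun x hx => (hρb ω x ⟨hs.trans hx.1, hx.2.trans htT⟩).1)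
      have : I s + ∫ v in s..t, ρ ω v = I t := hadd
      linarith
    have hXabs : IntegrableOn (fun s => |X ω s|) (Ioc 0 t) volume :=
      (hAIoc ω).mono_set (Ioc_subset_Ioc le_rfl htT)
    set J := ∫ s in (0:ℝ)..t, ρ ω s * X ω s * Real.exp (I s) with hJ_def
    have hJ : |J| ≤ ρhi * Real.exp (I t) * A ω := by
      have hbnd : IntegrableOn (fun s => ρhi * Real.exp (I t) * |X ω s|) (Ioc 0 t) volume :=
        hXabs.const_mul _
      calc |J| = ‖∫ s in Ioc 0 t, ρ ω s * X ω s * Real.exp (I s)‖ := by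
            rw [hJ_def, intervalIntegral.integral_of_le ht0, Real.norm_eq_abs]
        _ ≤ ∫ s in Ioc 0 t, ‖ρ ω s * X ω s * Real.exp (I s)‖ := norm_integral_le_integral_norm _
        _ ≤ ∫ s in Ioc 0 t, ρhi * Real.exp (I t) * |X ω s| := by
            refine integral_mono_of_nonneg
              (Filter.Eventually.of_forall fun s => norm_nonneg _) hbnd ?_
            refine (ae_restrict_iff' measurableSet_Ioc).2
              (Filter.Eventually.of_forall fun s hs => ?_)
            show ‖ρ ω s * X ω s * Real.exp (I s)‖ ≤ ρhi * Real.exp (I t) * |X ω s|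
            have hρs := hρb ω s ⟨hs.1.le, hs.2.trans htT⟩
            have hIs : Real.exp (I s) ≤ Real.exp (I t) :=
              Real.exp_le_exp.2 (hImono s hs.1.le hs.2)
            rw [Real.norm_eq_abs, abs_mul, abs_mul, abs_of_nonneg hρs.1,
              abs_of_pos (Real.exp_pos _)]
            nlinarith [abs_nonneg (X ω s), Real.exp_pos (I s), Real.exp_pos (I t),
              hρs.1, hρs.2, hρhi.le,
              mul_le_mul_of_nonneg_right hρs.2 (abs_nonneg (X ω s)),
              mul_le_mul_of_nonneg_left hIs
                (mul_nonneg hρhi.le (abs_nonneg (X ω s))),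
              mul_le_mul_of_nonneg_left hIs
                (mul_nonneg hρs.1 (abs_nonneg (X ω s)))]
        _ = ρhi * Real.exp (I t) * ∫ s in Ioc 0 t, |X ω s| := integral_const_mul _ _
        _ ≤ ρhi * Real.exp (I t) * A ω := by
            refine mul_le_mul_of_nonneg_left ?_ (by positivity)
            exact setIntegral_mono_set (hAIoc ω)
              (Filter.Eventually.of_forall fun s => abs_nonneg _)
              (HasSubset.Subset.eventuallyLE (Ioc_subset_Ioc le_rfl htT))
    have hYeq : Y ω t = γ * X ω t - γ * Real.exp (-(I t)) * (X₀ + J) := hY ω t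
    have hEle : Real.exp (-(I t)) ≤ 1 := Real.exp_le_one_iff.2 (by linarith)
    have hEprod : Real.exp (-(I t)) * Real.exp (I t) = 1 := by
      rw [← Real.exp_add]; simp
    have habs : |X₀ + J| ≤ X₀ + |J| := by
      calc |X₀ + J| ≤ |X₀| + |J| := abs_add_le _ _
        _ = X₀ + |J| := by rw [abs_of_nonneg hX₀]
    calc |Y ω t| = |γ * X ω t - γ * Real.exp (-(I t)) * (X₀ + J)| := by rw [hYeq]
      _ ≤ |γ * X ω t| + |γ * Real.exp (-(I t)) * (X₀ + J)| := by
          rw [sub_eq_add_neg]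
          exact (abs_add_le _ _).trans (by rw [abs_neg])
      _ = γ * |X ω t| + γ * Real.exp (-(I t)) * |X₀ + J| := by
          rw [abs_mul, abs_mul, abs_mul, abs_of_pos hγ, abs_of_pos (Real.exp_pos _)]
      _ ≤ γ * |X ω t| + (γ * X₀ + γ * ρhi * A ω) := by
          have h3 : Real.exp (-(I t)) * (ρhi * Real.exp (I t) * A ω) = ρhi * A ω := by
            rw [show Real.exp (-(I t)) * (ρhi * Real.exp (I t) * A ω)
              = ρhi * A ω * (Real.exp (-(I t)) * Real.exp (I t)) by ring, hEprod, mul_one]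
          nlinarith [mul_le_mul_of_nonneg_left habs (Real.exp_pos (-(I t))).le,
            mul_le_mul_of_nonneg_left hJ (Real.exp_pos (-(I t))).le,
            mul_nonneg hρhi.le (hAnn ω), hX₀, hEle, (Real.exp_pos (-(I t))).le,
            mul_le_mul_of_nonneg_right hEle hX₀]
  -- ω-level integrability
  have hQint : Integrable Q ℙ := by
    have he : (fun ω => ∫ t in (0:ℝ)..T, (X ω t) ^ 2) = Q := funext hQeq
    rwa [he] at hXint
  have hQInn : (0:ℝ) ≤ ∫ ω, Q ω ∂ℙ := integral_nonneg hQnn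
  set S := Real.sqrt (∫ ω, Q ω ∂ℙ) with hS_def
  have hSnn : 0 ≤ S := Real.sqrt_nonneg _
  have hS2 : S ^ 2 = ∫ ω, Q ω ∂ℙ := Real.sq_sqrt hQInn
  have hA2int : Integrable (fun ω => (A ω) ^ 2) ℙ := by
    refine (hQint.const_mul T).mono' ((hAm.pow_const 2).aestronglyMeasurable)
      (Filter.Eventually.of_forall fun ω => ?_)
    rw [Real.norm_eq_abs, abs_of_nonneg (sq_nonneg _)]
    exact hA2 ω
  have hAint : Integrable A ℙ := by
    refine ((integrable_const (1:ℝ)).add hA2int).mono' hAm.aestronglyMeasurable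
      (Filter.Eventually.of_forall fun ω => ?_)
    simp only [Pi.add_apply]
    rw [Real.norm_eq_abs, abs_of_nonneg (hAnn ω)]
    nlinarith [sq_nonneg (A ω - 1)]
  have hcm : Measurable (fun ω => γ * X₀ + γ * ρhi * A ω) :=
    measurable_const.add (hAm.const_mul (γ * ρhi))
  have hcnn : ∀ ω, 0 ≤ γ * X₀ + γ * ρhi * A ω := fun ω =>
    add_nonneg (mul_nonneg hγ.le hX₀) (mul_nonneg (mul_nonneg hγ.le hρhi.le) (hAnn ω))
  have hc2int : Integrable (fun ω => (γ * X₀ + γ * ρhi * A ω) ^ 2) ℙ := by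
    have he : (fun ω => (γ * X₀ + γ * ρhi * A ω) ^ 2)
        = fun ω => (γ * X₀) ^ 2 + ((2 * (γ * X₀) * (γ * ρhi)) * A ω
          + (γ * ρhi) ^ 2 * (A ω) ^ 2) := funext fun ω => by ring
    rw [he]
    exact (integrable_const _).add ((hAint.const_mul _).add (hA2int.const_mul _))
  have hcAint : Integrable (fun ω => (γ * X₀ + γ * ρhi * A ω) * A ω) ℙ := by
    refine (hc2int.add hA2int).mono' (hcm.mul hAm).aestronglyMeasurable
      (Filter.Eventually.of_forall fun ω => ?_)
    simp only [Pi.add_apply]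
    rw [Real.norm_eq_abs, abs_of_nonneg (mul_nonneg (hcnn ω) (hAnn ω))]
    nlinarith [sq_nonneg ((γ * X₀ + γ * ρhi * A ω) - A ω)]
  have hA2S : ∫ ω, (A ω) ^ 2 ∂ℙ ≤ T * ∫ ω, Q ω ∂ℙ := by
    calc ∫ ω, (A ω) ^ 2 ∂ℙ ≤ ∫ ω, T * Q ω ∂ℙ :=
          integral_mono_of_nonneg (Filter.Eventually.of_forall fun ω => sq_nonneg _)
            (hQint.const_mul T) (Filter.Eventually.of_forall hA2)
      _ = T * ∫ ω, Q ω ∂ℙ := integral_const_mul _ _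
  have hsqA : Real.sqrt (∫ ω, (A ω) ^ 2 ∂ℙ) ≤ Real.sqrt T * S := by
    rw [hS_def, ← Real.sqrt_mul hT.le]
    exact Real.sqrt_le_sqrt hA2S
  have hcsq : (∫ ω, (γ * ρhi * A ω) ^ 2 ∂ℙ) = (γ * ρhi) ^ 2 * ∫ ω, (A ω) ^ 2 ∂ℙ := by
    rw [← integral_const_mul]
    exact integral_congr_ae (Filter.Eventually.of_forall fun ω => by ring)
  have hcL2 : Real.sqrt (∫ ω, (γ * X₀ + γ * ρhi * A ω) ^ 2 ∂ℙ)
      ≤ γ * X₀ + γ * ρhi * (Real.sqrt T * S) := by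
    have hg2 : Integrable (fun ω => (γ * ρhi * A ω) ^ 2) ℙ := by
      have he : (fun ω => (γ * ρhi * A ω) ^ 2) = fun ω => (γ * ρhi) ^ 2 * (A ω) ^ 2 :=
        funext fun ω => by ring
      rw [he]; exact hA2int.const_mul _
    have h := l2tri (μ := ℙ) (f := fun _ => γ * X₀) (g := fun ω => γ * ρhi * A ω)
      aestronglyMeasurable_const (hAm.const_mul (γ * ρhi)).aestronglyMeasurable
      (integrable_const _) hg2 (fun _ => mul_nonneg hγ.le hX₀)
      (fun ω => mul_nonneg (mul_nonneg hγ.le hρhi.le) (hAnn ω))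
    have h1 : Real.sqrt (∫ _ω, (γ * X₀) ^ 2 ∂ℙ) = γ * X₀ := by
      rw [integral_const]
      simp [Real.sqrt_sq (mul_nonneg hγ.le hX₀)]
    have h2 : Real.sqrt (∫ ω, (γ * ρhi * A ω) ^ 2 ∂ℙ)
        ≤ γ * ρhi * (Real.sqrt T * S) := by
      rw [hcsq, Real.sqrt_mul (sq_nonneg _), Real.sqrt_sq (mul_nonneg hγ.le hρhi.le)]
      exact mul_le_mul_of_nonneg_left hsqA (mul_nonneg hγ.le hρhi.le)
    calc Real.sqrt (∫ ω, (γ * X₀ + γ * ρhi * A ω) ^ 2 ∂ℙ)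
        ≤ Real.sqrt (∫ _ω, (γ * X₀) ^ 2 ∂ℙ)
          + Real.sqrt (∫ ω, (γ * ρhi * A ω) ^ 2 ∂ℙ) := h
      _ ≤ γ * X₀ + γ * ρhi * (Real.sqrt T * S) := by rw [h1]; linarith
  have hc2b : ∫ ω, (γ * X₀ + γ * ρhi * A ω) ^ 2 ∂ℙ
      ≤ (γ * X₀ + γ * ρhi * (Real.sqrt T * S)) ^ 2 := by
    have hnn : (0:ℝ) ≤ ∫ ω, (γ * X₀ + γ * ρhi * A ω) ^ 2 ∂ℙ :=
      integral_nonneg fun ω => sq_nonneg _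
    calc ∫ ω, (γ * X₀ + γ * ρhi * A ω) ^ 2 ∂ℙ
        = (Real.sqrt (∫ ω, (γ * X₀ + γ * ρhi * A ω) ^ 2 ∂ℙ)) ^ 2 := (Real.sq_sqrt hnn).symm
      _ ≤ (γ * X₀ + γ * ρhi * (Real.sqrt T * S)) ^ 2 :=
          pow_le_pow_left₀ (Real.sqrt_nonneg _) hcL2 2
  simp only [hQeq]
  have hE1 : 1 ≤ Real.exp (T * ρhi) := Real.one_le_exp (by positivity)
  constructor
  · -- estimate (4.9)
    have hgT2int : Integrable (fun ω => (γ * |X ω T| + (γ * X₀ + γ * ρhi * A ω)) ^ 2) ℙ := by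
      refine ((hXT.const_mul (2 * γ ^ 2)).add (hc2int.const_mul 2)).mono'
        ((((hXTm.abs.const_mul γ).add hcm).pow_const 2).aestronglyMeasurable)
        (Filter.Eventually.of_forall fun ω => ?_)
      simp only [Pi.add_apply]
      rw [Real.norm_eq_abs, abs_of_nonneg (sq_nonneg _)]
      nlinarith [sq_abs (X ω T), sq_nonneg (γ * |X ω T| - (γ * X₀ + γ * ρhi * A ω))]
    have h49a : ∫ ω, (Y ω T) ^ 2 ∂ℙ
        ≤ ∫ ω, (γ * |X ω T| + (γ * X₀ + γ * ρhi * A ω)) ^ 2 ∂ℙ := by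
      refine integral_mono_of_nonneg (Filter.Eventually.of_forall fun ω => sq_nonneg _)
        hgT2int (Filter.Eventually.of_forall fun ω => ?_)
      have h := hkey ω T ⟨hT.le, le_refl T⟩
      calc (Y ω T) ^ 2 = |Y ω T| ^ 2 := (sq_abs _).symm
        _ ≤ (γ * |X ω T| + (γ * X₀ + γ * ρhi * A ω)) ^ 2 :=
            pow_le_pow_left₀ (abs_nonneg _) h 2
    have hXT2int : Integrable (fun ω => (γ * |X ω T|) ^ 2) ℙ := by
      have he : (fun ω => (γ * |X ω T|) ^ 2) = fun ω => γ ^ 2 * (X ω T) ^ 2 :=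
        funext fun ω => by rw [mul_pow, sq_abs]
      rw [he]; exact hXT.const_mul _
    have h49b := l2tri (μ := ℙ) (f := fun ω => γ * |X ω T|)
      (g := fun ω => γ * X₀ + γ * ρhi * A ω)
      (hXTm.abs.const_mul γ).aestronglyMeasurable hcm.aestronglyMeasurable
      hXT2int hc2int (fun ω => mul_nonneg hγ.le (abs_nonneg _)) hcnn
    have h49c : Real.sqrt (∫ ω, (γ * |X ω T|) ^ 2 ∂ℙ)
        = γ * Real.sqrt (∫ ω, (X ω T) ^ 2 ∂ℙ) := by
      rw [show (∫ ω, (γ * |X ω T|) ^ 2 ∂ℙ) = γ ^ 2 * ∫ ω, (X ω T) ^ 2 ∂ℙ by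
        rw [← integral_const_mul]
        exact integral_congr_ae (Filter.Eventually.of_forall fun ω => by
          show (γ * |X ω T|) ^ 2 = γ ^ 2 * (X ω T) ^ 2
          rw [mul_pow, sq_abs]),
        Real.sqrt_mul (sq_nonneg _), Real.sqrt_sq hγ.le]
    have hTS : Real.sqrt T * S = Real.sqrt (T * ∫ ω, Q ω ∂ℙ) := by
      rw [hS_def, ← Real.sqrt_mul hT.le]
    have hchain : Real.sqrt (∫ ω, (Y ω T) ^ 2 ∂ℙ)
        ≤ γ * Real.sqrt (∫ ω, (X ω T) ^ 2 ∂ℙ)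
          + (γ * X₀ + γ * ρhi * Real.sqrt (T * ∫ ω, Q ω ∂ℙ)) := by
      calc Real.sqrt (∫ ω, (Y ω T) ^ 2 ∂ℙ)
          ≤ Real.sqrt (∫ ω, (γ * |X ω T| + (γ * X₀ + γ * ρhi * A ω)) ^ 2 ∂ℙ) :=
            Real.sqrt_le_sqrt h49a
        _ ≤ Real.sqrt (∫ ω, (γ * |X ω T|) ^ 2 ∂ℙ)
            + Real.sqrt (∫ ω, (γ * X₀ + γ * ρhi * A ω) ^ 2 ∂ℙ) := h49b
        _ ≤ γ * Real.sqrt (∫ ω, (X ω T) ^ 2 ∂ℙ)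
            + (γ * X₀ + γ * ρhi * Real.sqrt (T * ∫ ω, Q ω ∂ℙ)) := by
              rw [h49c, ← hTS]; linarith [hcL2]
    have hsqTQ : 0 ≤ Real.sqrt (T * ∫ ω, Q ω ∂ℙ) := Real.sqrt_nonneg _
    nlinarith [mul_nonneg (mul_nonneg hγ.le hρhi.le) hsqTQ, hE1, hchain]
  · -- estimate (4.10)
    rw [← hS_def]
    have hω : ∀ ω, (∫ t in (0:ℝ)..T, (Y ω t) ^ 2)
        ≤ γ ^ 2 * Q ω + 2 * γ * ((γ * X₀ + γ * ρhi * A ω) * A ω)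
          + T * (γ * X₀ + γ * ρhi * A ω) ^ 2 := by
      intro ω
      obtain ⟨c, hc_eq, hcω⟩ : ∃ c, c = γ * X₀ + γ * ρhi * A ω ∧ 0 ≤ c :=
        ⟨_, rfl, hcnn ω⟩
      rw [← hc_eq]
      have hconst : IntegrableOn (fun _ : ℝ => c ^ 2) (Ioc 0 T) volume :=
        integrableOn_const (C := c ^ 2) measure_Ioc_lt_top.ne
      have ha : IntegrableOn (fun t => γ ^ 2 * (X ω t) ^ 2) (Ioc 0 T) volume :=
        (hQIoc ω).const_mul _
      have hb : IntegrableOn (fun t => 2 * (γ * c) * |X ω t|) (Ioc 0 T) volume :=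
        (hAIoc ω).const_mul _
      have hbc : IntegrableOn (fun t => 2 * (γ * c) * |X ω t| + c ^ 2) (Ioc 0 T) volume :=
        hb.add hconst
      have hbint : IntegrableOn
          (fun t => γ ^ 2 * (X ω t) ^ 2 + (2 * (γ * c) * |X ω t| + c ^ 2))
          (Ioc 0 T) volume := ha.add hbc
      have h1 : (∫ t in (0:ℝ)..T, (Y ω t) ^ 2)
          = ∫ t in Ioc (0:ℝ) T, (Y ω t) ^ 2 := intervalIntegral.integral_of_le hT.le
      have h2 : ∫ t in Ioc (0:ℝ) T, (Y ω t) ^ 2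
          ≤ ∫ t in Ioc (0:ℝ) T,
            (γ ^ 2 * (X ω t) ^ 2 + (2 * (γ * c) * |X ω t| + c ^ 2)) := by
        refine integral_mono_of_nonneg (Filter.Eventually.of_forall fun t => sq_nonneg _)
          hbint ?_
        refine (ae_restrict_iff' measurableSet_Ioc).2
          (Filter.Eventually.of_forall fun t htt => ?_)
        have h := hkey ω t ⟨htt.1.le, htt.2⟩
        rw [← hc_eq] at h
        show (Y ω t) ^ 2 ≤ γ ^ 2 * (X ω t) ^ 2 + (2 * (γ * c) * |X ω t| + c ^ 2)
        have h2' : (Y ω t) ^ 2 ≤ (γ * |X ω t| + c) ^ 2 := by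
          rw [← sq_abs (Y ω t)]
          exact pow_le_pow_left₀ (abs_nonneg _) h 2
        calc (Y ω t) ^ 2 ≤ (γ * |X ω t| + c) ^ 2 := h2'
          _ = γ ^ 2 * (X ω t) ^ 2 + (2 * (γ * c) * |X ω t| + c ^ 2) := by
              rw [add_sq, mul_pow, sq_abs]; ring
      have h3 : ∫ t in Ioc (0:ℝ) T,
            (γ ^ 2 * (X ω t) ^ 2 + (2 * (γ * c) * |X ω t| + c ^ 2))
          = γ ^ 2 * Q ω + (2 * (γ * c) * A ω + c ^ 2 * T) := by
        rw [integral_add ha hbc, integral_add hb hconst, integral_const_mul,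
          integral_const_mul, setIntegral_const]
        simp [Real.volume_Ioc, ENNReal.toReal_ofReal hT.le, smul_eq_mul, mul_comm, max_eq_left hT.le]
        rfl
      calc (∫ t in (0:ℝ)..T, (Y ω t) ^ 2)
          = ∫ t in Ioc (0:ℝ) T, (Y ω t) ^ 2 := h1
        _ ≤ ∫ t in Ioc (0:ℝ) T,
            (γ ^ 2 * (X ω t) ^ 2 + (2 * (γ * c) * |X ω t| + c ^ 2)) := h2
        _ = γ ^ 2 * Q ω + (2 * (γ * c) * A ω + c ^ 2 * T) := h3
        _ = γ ^ 2 * Q ω + 2 * γ * (c * A ω) + T * c ^ 2 := by ring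
    have hI1 : Integrable (fun ω => γ ^ 2 * Q ω) ℙ := hQint.const_mul _
    have hI2 : Integrable (fun ω => 2 * γ * ((γ * X₀ + γ * ρhi * A ω) * A ω)) ℙ :=
      hcAint.const_mul _
    have hI3 : Integrable (fun ω => T * (γ * X₀ + γ * ρhi * A ω) ^ 2) ℙ :=
      hc2int.const_mul _
    have hI12 : Integrable (fun ω => γ ^ 2 * Q ω
        + 2 * γ * ((γ * X₀ + γ * ρhi * A ω) * A ω)) ℙ := hI1.add hI2
    have hRHSint : Integrable (fun ω => γ ^ 2 * Q ω
        + 2 * γ * ((γ * X₀ + γ * ρhi * A ω) * A ω)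
        + T * (γ * X₀ + γ * ρhi * A ω) ^ 2) ℙ := hI12.add hI3
    have h410a : ∫ ω, (∫ t in (0:ℝ)..T, (Y ω t) ^ 2) ∂ℙ
        ≤ γ ^ 2 * (∫ ω, Q ω ∂ℙ)
          + 2 * γ * (∫ ω, (γ * X₀ + γ * ρhi * A ω) * A ω ∂ℙ)
          + T * ∫ ω, (γ * X₀ + γ * ρhi * A ω) ^ 2 ∂ℙ := by
      calc ∫ ω, (∫ t in (0:ℝ)..T, (Y ω t) ^ 2) ∂ℙ
          ≤ ∫ ω, (γ ^ 2 * Q ω + 2 * γ * ((γ * X₀ + γ * ρhi * A ω) * A ω)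
              + T * (γ * X₀ + γ * ρhi * A ω) ^ 2) ∂ℙ :=
            integral_mono_of_nonneg (Filter.Eventually.of_forall fun ω =>
              intervalIntegral.integral_nonneg hT.le fun t _ => sq_nonneg _) hRHSint
              (Filter.Eventually.of_forall hω)
        _ = _ := by
            rw [integral_add hI12 hI3, integral_add hI1 hI2,
              integral_const_mul, integral_const_mul, integral_const_mul]
    set m := γ * X₀ + γ * ρhi * (Real.sqrt T * S) with hm_def
    have hmnn : 0 ≤ m := add_nonneg (mul_nonneg hγ.le hX₀)
      (mul_nonneg (mul_nonneg hγ.le hρhi.le) (mul_nonneg (Real.sqrt_nonneg _) hSnn))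
    have hcA : ∫ ω, (γ * X₀ + γ * ρhi * A ω) * A ω ∂ℙ ≤ m * (Real.sqrt T * S) := by
      have h := cs_integral (μ := ℙ) (f := fun ω => γ * X₀ + γ * ρhi * A ω) (g := A)
        hcm.aestronglyMeasurable hAm.aestronglyMeasurable hc2int hA2int hcnn hAnn
      calc ∫ ω, (γ * X₀ + γ * ρhi * A ω) * A ω ∂ℙ
          ≤ Real.sqrt (∫ ω, (γ * X₀ + γ * ρhi * A ω) ^ 2 ∂ℙ)
            * Real.sqrt (∫ ω, (A ω) ^ 2 ∂ℙ) := h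
        _ ≤ m * (Real.sqrt T * S) :=
            mul_le_mul hcL2 hsqA (Real.sqrt_nonneg _) hmnn
    have htotal : ∫ ω, (∫ t in (0:ℝ)..T, (Y ω t) ^ 2) ∂ℙ
        ≤ (γ * S + Real.sqrt T * m) ^ 2 := by
      have hTT : Real.sqrt T * Real.sqrt T = T := Real.mul_self_sqrt hT.le
      nlinarith [h410a, hcA, hc2b, hS2, hT.le, hγ.le, hmnn, hSnn, Real.sqrt_nonneg T,
        mul_nonneg hγ.le hSnn]
    have hfin : Real.sqrt (∫ ω, (∫ t in (0:ℝ)..T, (Y ω t) ^ 2) ∂ℙ)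
        ≤ γ * S + Real.sqrt T * m := by
      calc Real.sqrt (∫ ω, (∫ t in (0:ℝ)..T, (Y ω t) ^ 2) ∂ℙ)
          ≤ Real.sqrt ((γ * S + Real.sqrt T * m) ^ 2) := Real.sqrt_le_sqrt htotal
        _ = γ * S + Real.sqrt T * m := Real.sqrt_sq
            (add_nonneg (mul_nonneg hγ.le hSnn)
              (mul_nonneg (Real.sqrt_nonneg _) hmnn))
    have hTT : Real.sqrt T * Real.sqrt T = T := Real.mul_self_sqrt hT.le
    have hlast : γ * S + Real.sqrt T * m
        ≤ γ * X₀ * Real.sqrt T + γ * (1 + T * ρhi * Real.exp (T * ρhi)) * S := by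
      rw [hm_def]
      have hprod : 0 ≤ γ * T * ρhi * S * (Real.exp (T * ρhi) - 1) :=
        mul_nonneg (mul_nonneg (mul_nonneg (mul_nonneg hγ.le hT.le) hρhi.le) hSnn)
          (by linarith)
      rw [show Real.sqrt T * (γ * X₀ + γ * ρhi * (Real.sqrt T * S))
        = γ * X₀ * Real.sqrt T + γ * ρhi * (Real.sqrt T * Real.sqrt T) * S by ring, hTT]
      nlinarith [hprod]
    linarith [hfin, hlast]
end

section
/- Let (Ω, F, (F_t)_{t∈I}, ℙ) be a filtered probability space and let X = {X_t}_{t∈I} and Y = {Y_t}_{t∈I} be continuous, adapted, essentially bounded, real-valued processes on an interval I. (i) If X satisfies Condition C.2 and Y satisfies Condition C.1, then the product process X·Y satisfies Condition C.1. (ii) If X and Y both satisfy Condition C.2, then X·Y satisfies Condition C.2. -/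
open Set MeasureTheory

/-- Condition C.1 of the paper. -/
def CondC1 {Ω : Type*} {mΩ : MeasurableSpace Ω} (ℙ : Measure Ω) (ℱ : Filtration ℝ mΩ)
    (I : Set ℝ) {E : Type*} [NormedAddCommGroup E] [NormedSpace ℝ E]
    (Y : ℝ → Ω → E) : Prop :=
  ∀ ε > (0:ℝ), ∃ δ > (0:ℝ), ∀ s ∈ I, ∀ V : Ω → ℝ,
    Integrable V ℙ → StronglyMeasurable[ℱ s] V →
      ∀ τ : Ω → ℝ, IsStoppingTime ℱ (fun ω => (τ ω : WithTop ℝ)) → (∀ ω, τ ω ∈ Icc s (s + δ) ∩ I) →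
        ‖∫ ω, V ω • (Y (τ ω) ω - Y s ω) ∂ℙ‖ ≤ ε * ∫ ω, |V ω| ∂ℙ

/-- Condition C.2 of the paper. -/
def CondC2 {Ω : Type*} {mΩ : MeasurableSpace Ω} (ℙ : Measure Ω) (ℱ : Filtration ℝ mΩ)
    (I : Set ℝ) {E : Type*} [NormedAddCommGroup E] (Y : ℝ → Ω → E) : Prop :=
  ∀ ε > (0:ℝ), ∃ δ > (0:ℝ), ∀ s ∈ I,
    ∀ᵐ ω ∂ℙ,
      (ℙ[fun ω' => ⨆ t : (Icc s (s + δ) ∩ I : Set ℝ), ‖Y t ω' - Y s ω'‖ | ℱ s]) ω ≤ ε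


lemma mySSup {A B : Set ℝ} (hBA : B ⊆ A) (hAB : A ⊆ closure B) (hB : B.Nonempty) :
    sSup A = sSup B := by
  by_cases hbd : BddAbove B
  · have hAbd : BddAbove A := (hbd.closure).mono hAB
    refine le_antisymm (csSup_le (hB.mono hBA) fun a ha => ?_) (csSup_le_csSup hAbd hB hBA)
    have h1 : a ∈ closure B := hAB ha
    have h2 : closure B ⊆ Iic (sSup B) :=
      closure_minimal (fun b hb => le_csSup hbd hb) isClosed_Iic
    exact h2 h1
  · have hAbd : ¬ BddAbove A := fun h => hbd (h.mono hBA)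
    rw [Real.sSup_of_not_bddAbove hAbd, Real.sSup_of_not_bddAbove hbd]

lemma myDense (S : Set ℝ) (hS : S.Nonempty) :
    ∃ D : Set ℝ, D ⊆ S ∧ D.Countable ∧ D.Nonempty ∧ S ⊆ closure D := by
  haveI : Nonempty ↥S := hS.to_subtype
  obtain ⟨D0, hD0c, hD0d⟩ := TopologicalSpace.exists_countable_dense ↥S
  refine ⟨Subtype.val '' D0, ?_, hD0c.image _, ?_, ?_⟩
  · rintro x ⟨y, _, rfl⟩; exact y.2
  · obtain ⟨d, hd⟩ := hD0d.nonempty; exact ⟨d, d, hd, rfl⟩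
  · intro x hx
    have h1 : (⟨x, hx⟩ : ↥S) ∈ closure D0 := hD0d _
    have h2 : x ∈ Subtype.val '' closure D0 := ⟨_, h1, rfl⟩
    exact (image_closure_subset_closure_image continuous_subtype_val) h2

lemma mySupDense {S D : Set ℝ} (hDS : D ⊆ S) (hD : D.Nonempty) (hSD : S ⊆ closure D)
    {φ : ℝ → ℝ} (hφ : ContinuousOn φ S) :
    (⨆ t : S, φ t) = ⨆ d : D, φ d := by
  have h1 : (⨆ t : S, φ t) = sSup (φ '' S) := by rw [iSup, ← Set.image_eq_range]
  have h2 : (⨆ d : D, φ d) = sSup (φ '' D) := by rw [iSup, ← Set.image_eq_range]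
  rw [h1, h2]
  refine mySSup (image_mono hDS) ?_ (hD.image φ)
  rintro _ ⟨t, htS, rfl⟩
  exact ((hφ t htS).mono hDS).mem_closure_image (hSD htS)

lemma mySupMeas {Ω : Type*} {mΩ : MeasurableSpace Ω} (f : ℝ → Ω → ℝ) (I S : Set ℝ)
    (hS : S.Nonempty) (hSI : S ⊆ I) (hm : ∀ t ∈ I, Measurable (f t))
    (hc : ∀ ω, ContinuousOn (fun t => f t ω) I) (s : ℝ) (hs : s ∈ I) :
    Measurable (fun ω => ⨆ t : S, ‖f t ω - f s ω‖) := by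
  obtain ⟨D, hDS, hDc, hDne, hSD⟩ := myDense S hS
  have heq : (fun ω => ⨆ t : S, ‖f t ω - f s ω‖)
      = fun ω => ⨆ d : D, ‖f d ω - f s ω‖ := by
    funext ω
    exact mySupDense hDS hDne hSD ((((hc ω).mono hSI).sub continuousOn_const).norm)
  rw [heq]
  haveI : Countable ↥D := hDc.to_subtype
  exact Measurable.iSup fun d => ((hm d (hSI (hDS d.2))).sub (hm s hs)).norm

lemma myStopped {Ω : Type*} {mΩ : MeasurableSpace Ω} (f : ℝ → Ω → ℝ) (I : Set ℝ)
    (hm : ∀ t ∈ I, Measurable (f t)) (hc : ∀ ω, ContinuousOn (fun t => f t ω) I)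
    (τ : Ω → ℝ) (hτm : Measurable τ) (hτI : ∀ ω, τ ω ∈ I) :
    Measurable (fun ω => f (τ ω) ω) := by
  have hu : Measurable (Function.uncurry (fun (t : ↥I) (ω : Ω) => f t ω)) :=
    measurable_uncurry_of_continuous_of_measurable
      (fun ω => (hc ω).restrict) (fun t => hm t t.2)
  have h2 : Measurable (fun ω => ((⟨τ ω, hτI ω⟩ : ↥I), ω)) :=
    (hτm.subtype_mk).prodMk measurable_id
  exact hu.comp h2

/-- Integrability of the sup process. -/
lemma mySupInt {Ω : Type*} {mΩ : MeasurableSpace Ω} (ℙ : Measure Ω)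
    [IsProbabilityMeasure ℙ] (f : ℝ → Ω → ℝ) (I S : Set ℝ)
    (hS : S.Nonempty) (hSI : S ⊆ I) (hm : ∀ t ∈ I, Measurable (f t))
    (hc : ∀ ω, ContinuousOn (fun t => f t ω) I) (s : ℝ) (hs : s ∈ I) (C : ℝ)
    (hb : ∀ᵐ ω ∂ℙ, ∀ t ∈ I, |f t ω| ≤ C) :
    Integrable (fun ω => ⨆ t : S, ‖f t ω - f s ω‖) ℙ := by
  haveI : Nonempty ↥S := hS.to_subtype
  refine Integrable.mono' (integrable_const (2*C))
    (mySupMeas f I S hS hSI hm hc s hs).aestronglyMeasurable ?_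
  filter_upwards [hb] with ω hω
  rw [Real.norm_eq_abs, abs_of_nonneg (Real.iSup_nonneg fun t => norm_nonneg _)]
  refine ciSup_le fun t => (norm_sub_le _ _).trans ?_
  rw [Real.norm_eq_abs, Real.norm_eq_abs]
  linarith [hω t (hSI t.2), hω s hs]

/-- Theorem A.5: for continuous, adapted, essentially bounded real processes `X`, `Y`:
(i) if `X` satisfies C.2 and `Y` satisfies C.1, the product satisfies C.1;
(ii) if both satisfy C.2, the product satisfies C.2. -/
theorem stmt_13 {Ω : Type*} {mΩ : MeasurableSpace Ω} (ℙ : Measure Ω)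
    [IsProbabilityMeasure ℙ] (ℱ : Filtration ℝ mΩ) (I : Set ℝ)
    (X Y : ℝ → Ω → ℝ)
    (hXa : ∀ t ∈ I, StronglyMeasurable[ℱ t] (X t))
    (hYa : ∀ t ∈ I, StronglyMeasurable[ℱ t] (Y t))
    (hXc : ∀ ω, ContinuousOn (fun t => X t ω) I)
    (hYc : ∀ ω, ContinuousOn (fun t => Y t ω) I)
    (hXb : ∃ CX : ℝ, ∀ᵐ ω ∂ℙ, ∀ t ∈ I, |X t ω| ≤ CX)
    (hYb : ∃ CY : ℝ, ∀ᵐ ω ∂ℙ, ∀ t ∈ I, |Y t ω| ≤ CY) :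
    (CondC2 ℙ ℱ I X → CondC1 ℙ ℱ I Y → CondC1 ℙ ℱ I (fun t ω => X t ω * Y t ω)) ∧
      (CondC2 ℙ ℱ I X → CondC2 ℙ ℱ I Y → CondC2 ℙ ℱ I (fun t ω => X t ω * Y t ω)) := by
  obtain ⟨CX, hCX⟩ := hXb
  obtain ⟨CY, hCY⟩ := hYb
  set C : ℝ := max CX (max CY 1) with hCdef
  have hC1 : (1:ℝ) ≤ C := le_trans (le_max_right CY 1) (le_max_right _ _)
  have hC0 : (0:ℝ) ≤ C := by linarith
  have hgood : ∀ᵐ ω ∂ℙ, (∀ t ∈ I, |X t ω| ≤ C) ∧ (∀ t ∈ I, |Y t ω| ≤ C) := by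
    filter_upwards [hCX, hCY] with ω h1 h2
    exact ⟨fun t ht => (h1 t ht).trans (le_max_left _ _),
      fun t ht => (h2 t ht).trans (le_trans (le_max_left CY 1) (le_max_right _ _))⟩
  have hXm : ∀ t ∈ I, Measurable (X t) :=
    fun t ht => Measurable.le (ℱ.le t) (hXa t ht).measurable
  have hYm : ∀ t ∈ I, Measurable (Y t) :=
    fun t ht => Measurable.le (ℱ.le t) (hYa t ht).measurable
  haveI : ∀ s : ℝ, SigmaFinite (ℙ.trim (ℱ.le s)) := fun s => inferInstance
  constructor
  · -- Part (i)
    intro hX2 hY1 ε hε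
    have hC2 : (0:ℝ) < 2*C := by linarith
    set ε' : ℝ := ε / (2*C) with hε'def
    have hε' : 0 < ε' := div_pos hε hC2
    obtain ⟨δ1, hδ1, hY1s⟩ := hY1 ε' hε'
    obtain ⟨δ2, hδ2, hX2s⟩ := hX2 ε' hε'
    refine ⟨min δ1 δ2, lt_min hδ1 hδ2, fun s hs V hVint hVmeas τ hτst hτmem => ?_⟩
    have hXs := hX2s s hs
    -- membership facts
    have hmem1 : ∀ ω, τ ω ∈ Icc s (s + δ1) ∩ I := fun ω =>
      ⟨⟨(hτmem ω).1.1, le_trans (hτmem ω).1.2 (by linarith [min_le_left δ1 δ2])⟩, (hτmem ω).2⟩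
    have hmem2 : ∀ ω, τ ω ∈ Icc s (s + δ2) ∩ I := fun ω =>
      ⟨⟨(hτmem ω).1.1, le_trans (hτmem ω).1.2 (by linarith [min_le_right δ1 δ2])⟩, (hτmem ω).2⟩
    have hτI : ∀ ω, τ ω ∈ I := fun ω => (hτmem ω).2
    have hSXne : (Icc s (s + δ2) ∩ I).Nonempty := ⟨s, ⟨le_rfl, by linarith⟩, hs⟩
    have hSXI : Icc s (s + δ2) ∩ I ⊆ I := inter_subset_right
    haveI : Nonempty ↥(Icc s (s + δ2) ∩ I) := hSXne.to_subtype
    -- τ measurable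
    have hτmble : Measurable τ := by
      have hle : ∀ ω, (τ ω : WithTop ℝ) ≤ ((s + min δ1 δ2 : ℝ) : WithTop ℝ) :=
        fun ω => WithTop.coe_le_coe.mpr (hτmem ω).1.2
      exact (Measurable.le (ℱ.le (s + min δ1 δ2)) (hτst.measurable_of_le hle)).untopD 0
    -- stopped processes measurable
    have hXτm : Measurable (fun ω => X (τ ω) ω) := myStopped X I hXm hXc τ hτmble hτI
    have hYτm : Measurable (fun ω => Y (τ ω) ω) := myStopped Y I hYm hYc τ hτmble hτI
    -- gX: the conditional-expectation-controlled sup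
    have hgXmeas : Measurable (fun ω => ⨆ t : (Icc s (s + δ2) ∩ I : Set ℝ), ‖X t ω - X s ω‖) :=
      mySupMeas X I _ hSXne hSXI hXm hXc s hs
    have hgXint : Integrable (fun ω => ⨆ t : (Icc s (s + δ2) ∩ I : Set ℝ), ‖X t ω - X s ω‖) ℙ := by
      refine mySupInt ℙ X I _ hSXne hSXI hXm hXc s hs C ?_
      filter_upwards [hgood] with ω hω using hω.1
    -- h = |X_τ - X_s|
    set h : Ω → ℝ := fun ω => |X (τ ω) ω - X s ω| with hhdef
    have hhmeas : Measurable h := (hXτm.sub (hXm s hs)).abs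
    have hhint : Integrable h ℙ := by
      refine Integrable.mono' (integrable_const (2*C)) hhmeas.aestronglyMeasurable ?_
      filter_upwards [hgood] with ω hω
      rw [Real.norm_eq_abs, abs_abs]
      calc |X (τ ω) ω - X s ω| ≤ |X (τ ω) ω| + |X s ω| := abs_sub _ _
        _ ≤ 2*C := by linarith [hω.1 (τ ω) (hτI ω), hω.1 s hs]
    have hhle : h ≤ᵐ[ℙ] fun ω => ⨆ t : (Icc s (s + δ2) ∩ I : Set ℝ), ‖X t ω - X s ω‖ := by
      filter_upwards [hgood] with ω hω
      have hbdd : BddAbove (range fun t : (Icc s (s + δ2) ∩ I : Set ℝ) => ‖X t ω - X s ω‖) := by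
        refine ⟨2*C, ?_⟩
        rintro x ⟨t, rfl⟩
        show ‖X (t:ℝ) ω - X s ω‖ ≤ 2*C
        rw [Real.norm_eq_abs]
        calc |X (t:ℝ) ω - X s ω| ≤ |X (t:ℝ) ω| + |X s ω| := abs_sub _ _
          _ ≤ 2*C := by linarith [hω.1 (t:ℝ) (hSXI t.2), hω.1 s hs]
      have := le_ciSup hbdd (⟨τ ω, hmem2 ω⟩ : (Icc s (s + δ2) ∩ I : Set ℝ))
      simpa [Real.norm_eq_abs] using this
    have hcond : ∀ᵐ ω ∂ℙ, (ℙ[h|ℱ s]) ω ≤ ε' := by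
      have h1 := condExp_mono (μ := ℙ) (m := ℱ s) hhint hgXint hhle
      filter_upwards [h1, hXs] with ω h1ω h2ω using le_trans h1ω h2ω
    have hcondnn : ∀ᵐ ω ∂ℙ, 0 ≤ (ℙ[h|ℱ s]) ω :=
      condExp_nonneg (ae_of_all _ fun ω => abs_nonneg _)
    -- W = |V|
    set W : Ω → ℝ := fun ω => |V ω| with hWdef
    have hWmeas : StronglyMeasurable[ℱ s] W := by
      simpa [Real.norm_eq_abs] using hVmeas.norm
    have hWint : Integrable W ℙ := hVint.abs
    have hWnn : ∀ ω, 0 ≤ W ω := fun ω => abs_nonneg _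
    -- key estimate : ∫ W * h ≤ ε' ∫ W
    have hWh_int : Integrable (W * h) ℙ := by
      have := (Integrable.bdd_mul (c := 2*C) hWint hhmeas.aestronglyMeasurable ?_)
      · exact this.congr (ae_of_all _ fun ω => mul_comm _ _)
      · filter_upwards [hgood] with ω hω
        rw [Real.norm_eq_abs, abs_abs]
        calc |X (τ ω) ω - X s ω| ≤ |X (τ ω) ω| + |X s ω| := abs_sub _ _
          _ ≤ 2*C := by linarith [hω.1 (τ ω) (hτI ω), hω.1 s hs]
    have hkey : ∫ ω, W ω * h ω ∂ℙ ≤ ε' * ∫ ω, W ω ∂ℙ := by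
      have step2 : ℙ[W * h|ℱ s] =ᵐ[ℙ] W * ℙ[h|ℱ s] :=
        condExp_mul_of_stronglyMeasurable_left hWmeas hWh_int hhint
      have step1 : ∫ ω, W ω * h ω ∂ℙ = ∫ ω, (ℙ[W * h|ℱ s]) ω ∂ℙ :=
        (integral_condExp (ℱ.le s)).symm
      rw [step1, integral_congr_ae step2]
      have hcondint : Integrable (fun ω => W ω * (ℙ[h|ℱ s]) ω) ℙ := by
        refine Integrable.congr (Integrable.bdd_mul (c := ε') hWint
          ((stronglyMeasurable_condExp.mono (ℱ.le s)).aestronglyMeasurable) ?_)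
          (ae_of_all _ fun ω => mul_comm _ _)
        filter_upwards [hcond, hcondnn] with ω h1ω h2ω
        rw [Real.norm_eq_abs, abs_of_nonneg h2ω]; exact h1ω
      have : ∫ ω, (W * ℙ[h|ℱ s]) ω ∂ℙ ≤ ∫ ω, W ω * ε' ∂ℙ := by
        refine integral_mono_ae hcondint (hWint.mul_const ε') ?_
        filter_upwards [hcond] with ω h1ω
        exact mul_le_mul_of_nonneg_left h1ω (hWnn ω)
      refine this.trans ?_
      rw [integral_mul_const]
      ring_nf
      exact le_rfl
    -- Term 1 : V' = V * X_s
    set V' : Ω → ℝ := fun ω => V ω * X s ω with hV'def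
    have hXsb : ∀ᵐ ω ∂ℙ, ‖X s ω‖ ≤ C := by
      filter_upwards [hgood] with ω hω
      rw [Real.norm_eq_abs]; exact hω.1 s hs
    have hV'int : Integrable V' ℙ :=
      (Integrable.bdd_mul hVint ((hXa s hs).mono (ℱ.le s)).aestronglyMeasurable hXsb).congr
        (ae_of_all _ fun ω => mul_comm _ _)
    have hV'meas : StronglyMeasurable[ℱ s] V' := hVmeas.mul (hXa s hs)
    have hterm1 : ‖∫ ω, V' ω • (Y (τ ω) ω - Y s ω) ∂ℙ‖ ≤ ε' * ∫ ω, |V' ω| ∂ℙ :=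
      hY1s s hs V' hV'int hV'meas τ hτst hmem1
    have hV'abs : ∫ ω, |V' ω| ∂ℙ ≤ C * ∫ ω, |V ω| ∂ℙ := by
      rw [← integral_const_mul]
      refine integral_mono_ae hV'int.abs (hVint.abs.const_mul C) ?_
      filter_upwards [hgood] with ω hω
      rw [hV'def, abs_mul, mul_comm C]
      exact mul_le_mul_of_nonneg_left (hω.1 s hs) (abs_nonneg _)
    -- splitting
    have hYτsub_m : Measurable (fun ω => Y (τ ω) ω - Y s ω) := hYτm.sub (hYm s hs)
    have hAint : Integrable (fun ω => V' ω * (Y (τ ω) ω - Y s ω)) ℙ := by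
      refine (Integrable.bdd_mul (c := 2*C) hV'int hYτsub_m.aestronglyMeasurable ?_).congr
        (ae_of_all _ fun ω => mul_comm _ _)
      filter_upwards [hgood] with ω hω
      rw [Real.norm_eq_abs]
      calc |Y (τ ω) ω - Y s ω| ≤ |Y (τ ω) ω| + |Y s ω| := abs_sub _ _
        _ ≤ 2*C := by linarith [hω.2 (τ ω) (hτI ω), hω.2 s hs]
    have hBm : Measurable (fun ω => (X (τ ω) ω - X s ω) * Y (τ ω) ω) :=
      (hXτm.sub (hXm s hs)).mul hYτm
    have hBint : Integrable (fun ω => V ω * ((X (τ ω) ω - X s ω) * Y (τ ω) ω)) ℙ := by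
      refine (Integrable.bdd_mul (c := 2*C*C) hVint hBm.aestronglyMeasurable ?_).congr
        (ae_of_all _ fun ω => mul_comm _ _)
      filter_upwards [hgood] with ω hω
      rw [Real.norm_eq_abs, abs_mul]
      have h1 : |X (τ ω) ω - X s ω| ≤ 2*C := by
        calc |X (τ ω) ω - X s ω| ≤ |X (τ ω) ω| + |X s ω| := abs_sub _ _
          _ ≤ 2*C := by linarith [hω.1 (τ ω) (hτI ω), hω.1 s hs]
      have h2 : |Y (τ ω) ω| ≤ C := hω.2 (τ ω) (hτI ω)
      exact mul_le_mul h1 h2 (abs_nonneg _) (by linarith)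
    have hsplit : ∫ ω, V ω • (X (τ ω) ω * Y (τ ω) ω - X s ω * Y s ω) ∂ℙ
        = (∫ ω, V' ω * (Y (τ ω) ω - Y s ω) ∂ℙ)
          + ∫ ω, V ω * ((X (τ ω) ω - X s ω) * Y (τ ω) ω) ∂ℙ := by
      rw [← integral_add hAint hBint]
      refine integral_congr_ae (ae_of_all _ fun ω => ?_)
      simp only [smul_eq_mul, hV'def]
      ring
    have hterm2 : ‖∫ ω, V ω * ((X (τ ω) ω - X s ω) * Y (τ ω) ω) ∂ℙ‖
        ≤ C * (ε' * ∫ ω, W ω ∂ℙ) := by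
      refine (norm_integral_le_integral_norm _).trans ?_
      have hle : ∫ ω, ‖V ω * ((X (τ ω) ω - X s ω) * Y (τ ω) ω)‖ ∂ℙ
          ≤ ∫ ω, C * (W ω * h ω) ∂ℙ := by
        refine integral_mono_ae hBint.norm (hWh_int.const_mul C) ?_
        filter_upwards [hgood] with ω hω
        rw [Real.norm_eq_abs, abs_mul, abs_mul]
        have h2 : |Y (τ ω) ω| ≤ C := hω.2 (τ ω) (hτI ω)
        calc |V ω| * (|X (τ ω) ω - X s ω| * |Y (τ ω) ω|)
            ≤ |V ω| * (|X (τ ω) ω - X s ω| * C) := by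
              refine mul_le_mul_of_nonneg_left ?_ (abs_nonneg _)
              exact mul_le_mul_of_nonneg_left h2 (abs_nonneg _)
          _ = C * (W ω * h ω) := by rw [hWdef, hhdef]; ring
      refine hle.trans ?_
      rw [integral_const_mul]
      exact mul_le_mul_of_nonneg_left hkey hC0
    show ‖∫ ω, V ω • (X (τ ω) ω * Y (τ ω) ω - X s ω * Y s ω) ∂ℙ‖ ≤ ε * ∫ ω, |V ω| ∂ℙ
    rw [hsplit]
    have hVnn : 0 ≤ ∫ ω, |V ω| ∂ℙ := integral_nonneg fun ω => abs_nonneg _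
    calc ‖(∫ ω, V' ω * (Y (τ ω) ω - Y s ω) ∂ℙ)
          + ∫ ω, V ω * ((X (τ ω) ω - X s ω) * Y (τ ω) ω) ∂ℙ‖
        ≤ ‖∫ ω, V' ω * (Y (τ ω) ω - Y s ω) ∂ℙ‖
          + ‖∫ ω, V ω * ((X (τ ω) ω - X s ω) * Y (τ ω) ω) ∂ℙ‖ := norm_add_le _ _
      _ ≤ ε' * ∫ ω, |V' ω| ∂ℙ + C * (ε' * ∫ ω, W ω ∂ℙ) := by
          refine add_le_add ?_ hterm2
          simpa only [smul_eq_mul] using hterm1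
      _ ≤ ε' * (C * ∫ ω, |V ω| ∂ℙ) + C * (ε' * ∫ ω, |V ω| ∂ℙ) := by
          refine add_le_add (mul_le_mul_of_nonneg_left hV'abs hε'.le) le_rfl
      _ = (2*C*ε') * ∫ ω, |V ω| ∂ℙ := by ring
      _ = ε * ∫ ω, |V ω| ∂ℙ := by
          rw [hε'def]; field_simp
  · -- Part (ii)
    intro hX2 hY2 ε hε
    have hC2 : (0:ℝ) < 2*C := by linarith
    set ε' : ℝ := ε / (2*C) with hε'def
    have hε' : 0 < ε' := div_pos hε hC2
    obtain ⟨δX, hδX, hXs'⟩ := hX2 ε' hε'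
    obtain ⟨δY, hδY, hYs'⟩ := hY2 ε' hε'
    refine ⟨min δX δY, lt_min hδX hδY, fun s hs => ?_⟩
    have hXs := hXs' s hs
    have hYs := hYs' s hs
    have hδ : 0 < min δX δY := lt_min hδX hδY
    have hSne : (Icc s (s + min δX δY) ∩ I).Nonempty := ⟨s, ⟨le_rfl, by linarith⟩, hs⟩
    have hSXne : (Icc s (s + δX) ∩ I).Nonempty := ⟨s, ⟨le_rfl, by linarith⟩, hs⟩
    have hSYne : (Icc s (s + δY) ∩ I).Nonempty := ⟨s, ⟨le_rfl, by linarith⟩, hs⟩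
    have hSI : Icc s (s + min δX δY) ∩ I ⊆ I := inter_subset_right
    have hSXI : Icc s (s + δX) ∩ I ⊆ I := inter_subset_right
    have hSYI : Icc s (s + δY) ∩ I ⊆ I := inter_subset_right
    have hSSX : Icc s (s + min δX δY) ∩ I ⊆ Icc s (s + δX) ∩ I :=
      inter_subset_inter_left _ (Icc_subset_Icc le_rfl (by linarith [min_le_left δX δY]))
    have hSSY : Icc s (s + min δX δY) ∩ I ⊆ Icc s (s + δY) ∩ I :=
      inter_subset_inter_left _ (Icc_subset_Icc le_rfl (by linarith [min_le_right δX δY]))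
    haveI : Nonempty ↥(Icc s (s + min δX δY) ∩ I) := hSne.to_subtype
    have hXYm : ∀ t ∈ I, Measurable (fun ω => X t ω * Y t ω) :=
      fun t ht => (hXm t ht).mul (hYm t ht)
    have hXYc : ∀ ω, ContinuousOn (fun t => X t ω * Y t ω) I :=
      fun ω => (hXc ω).mul (hYc ω)
    set g : Ω → ℝ := fun ω => ⨆ t : (Icc s (s + min δX δY) ∩ I : Set ℝ),
      ‖X t ω * Y t ω - X s ω * Y s ω‖ with hgdef
    set gX : Ω → ℝ := fun ω => ⨆ t : (Icc s (s + δX) ∩ I : Set ℝ), ‖X t ω - X s ω‖ with hgXdef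
    set gY : Ω → ℝ := fun ω => ⨆ t : (Icc s (s + δY) ∩ I : Set ℝ), ‖Y t ω - Y s ω‖ with hgYdef
    have hgmeas : Measurable g :=
      mySupMeas (fun t ω => X t ω * Y t ω) I _ hSne hSI hXYm hXYc s hs
    have hgXint : Integrable gX ℙ := by
      refine mySupInt ℙ X I _ hSXne hSXI hXm hXc s hs C ?_
      filter_upwards [hgood] with ω hω using hω.1
    have hgYint : Integrable gY ℙ := by
      refine mySupInt ℙ Y I _ hSYne hSYI hYm hYc s hs C ?_
      filter_upwards [hgood] with ω hω using hω.2
    have hbddX : ∀ ω, (∀ t ∈ I, |X t ω| ≤ C) →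
        BddAbove (range fun t : (Icc s (s + δX) ∩ I : Set ℝ) => ‖X t ω - X s ω‖) := by
      intro ω hω
      refine ⟨2*C, ?_⟩
      rintro x ⟨t, rfl⟩
      show ‖X (t:ℝ) ω - X s ω‖ ≤ 2*C
      rw [Real.norm_eq_abs]
      calc |X (t:ℝ) ω - X s ω| ≤ |X (t:ℝ) ω| + |X s ω| := abs_sub _ _
        _ ≤ 2*C := by linarith [hω (t:ℝ) (hSXI t.2), hω s hs]
    have hbddY : ∀ ω, (∀ t ∈ I, |Y t ω| ≤ C) →
        BddAbove (range fun t : (Icc s (s + δY) ∩ I : Set ℝ) => ‖Y t ω - Y s ω‖) := by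
      intro ω hω
      refine ⟨2*C, ?_⟩
      rintro x ⟨t, rfl⟩
      show ‖Y (t:ℝ) ω - Y s ω‖ ≤ 2*C
      rw [Real.norm_eq_abs]
      calc |Y (t:ℝ) ω - Y s ω| ≤ |Y (t:ℝ) ω| + |Y s ω| := abs_sub _ _
        _ ≤ 2*C := by linarith [hω (t:ℝ) (hSYI t.2), hω s hs]
    have hgle : g ≤ᵐ[ℙ] fun ω => C * gY ω + C * gX ω := by
      filter_upwards [hgood] with ω hω
      refine ciSup_le fun t => ?_
      have htI : (t:ℝ) ∈ I := hSI t.2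
      have h1 : ‖Y (t:ℝ) ω - Y s ω‖ ≤ gY ω :=
        le_ciSup (hbddY ω hω.2) (⟨t, hSSY t.2⟩ : (Icc s (s + δY) ∩ I : Set ℝ))
      have h2 : ‖X (t:ℝ) ω - X s ω‖ ≤ gX ω :=
        le_ciSup (hbddX ω hω.1) (⟨t, hSSX t.2⟩ : (Icc s (s + δX) ∩ I : Set ℝ))
      rw [Real.norm_eq_abs] at *
      have heq : X (t:ℝ) ω * Y (t:ℝ) ω - X s ω * Y s ω
          = X (t:ℝ) ω * (Y (t:ℝ) ω - Y s ω) + (X (t:ℝ) ω - X s ω) * Y s ω := by ring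
      calc |X (t:ℝ) ω * Y (t:ℝ) ω - X s ω * Y s ω|
          ≤ |X (t:ℝ) ω * (Y (t:ℝ) ω - Y s ω)| + |(X (t:ℝ) ω - X s ω) * Y s ω| := by
            rw [heq]; exact abs_add_le _ _
        _ = |X (t:ℝ) ω| * |Y (t:ℝ) ω - Y s ω| + |X (t:ℝ) ω - X s ω| * |Y s ω| := by
            rw [abs_mul, abs_mul]
        _ ≤ C * gY ω + C * gX ω := by
            have hX1 : |X (t:ℝ) ω| ≤ C := hω.1 _ htI
            have hY1 : |Y s ω| ≤ C := hω.2 s hs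
            have hgXnn : 0 ≤ |X (t:ℝ) ω - X s ω| := abs_nonneg _
            have hgYnn : 0 ≤ |Y (t:ℝ) ω - Y s ω| := abs_nonneg _
            nlinarith
    have hgint : Integrable g ℙ := by
      refine mySupInt ℙ (fun t ω => X t ω * Y t ω) I _ hSne hSI hXYm hXYc s hs (C*C) ?_
      filter_upwards [hgood] with ω hω
      intro t ht
      rw [abs_mul]
      exact mul_le_mul (hω.1 t ht) (hω.2 t ht) (abs_nonneg _) hC0
    have hFint : Integrable ((C • gY) + (C • gX)) ℙ :=
      (hgYint.smul C).add (hgXint.smul C)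
    have hmono : ℙ[g|ℱ s] ≤ᵐ[ℙ] ℙ[(C • gY) + (C • gX)|ℱ s] := by
      refine condExp_mono hgint hFint ?_
      filter_upwards [hgle] with ω hω
      simpa [smul_eq_mul] using hω
    have hadd : ℙ[(C • gY) + (C • gX)|ℱ s] =ᵐ[ℙ] ℙ[C • gY|ℱ s] + ℙ[C • gX|ℱ s] :=
      condExp_add (hgYint.smul C) (hgXint.smul C) (ℱ s)
    have hsmulY : ℙ[C • gY|ℱ s] =ᵐ[ℙ] C • ℙ[gY|ℱ s] := condExp_smul C gY (ℱ s)
    have hsmulX : ℙ[C • gX|ℱ s] =ᵐ[ℙ] C • ℙ[gX|ℱ s] := condExp_smul C gX (ℱ s)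
    filter_upwards [hmono, hadd, hsmulY, hsmulX, hXs, hYs] with ω h1 h2 h3 h4 h5 h6
    have : (ℙ[g|ℱ s]) ω ≤ C * (ℙ[gY|ℱ s]) ω + C * (ℙ[gX|ℱ s]) ω := by
      calc (ℙ[g|ℱ s]) ω ≤ (ℙ[(C • gY) + (C • gX)|ℱ s]) ω := h1
        _ = (ℙ[C • gY|ℱ s]) ω + (ℙ[C • gX|ℱ s]) ω := h2
        _ = C * (ℙ[gY|ℱ s]) ω + C * (ℙ[gX|ℱ s]) ω := by
            rw [h3, h4]; simp [smul_eq_mul]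
    refine this.trans ?_
    have hfin : C * ε' + C * ε' = ε := by rw [hε'def]; field_simp; ring
    calc C * (ℙ[gY|ℱ s]) ω + C * (ℙ[gX|ℱ s]) ω
        ≤ C * ε' + C * ε' := add_le_add (mul_le_mul_of_nonneg_left h6 hC0)
          (mul_le_mul_of_nonneg_left h5 hC0)
      _ = ε := hfin
end
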